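/- arXiv:2008.09051 — 8 statements merged into one kernel-verified Lean document; each statement's English description precedes it below -/
import Mathlib

section
/- Let n, k be integers with n > 2k and k ≥ 1, and let i be an integer with 0 ≤ i < k. Then the Kronecker cover K_2 × G_i(n,k) is isomorphic to the bipartite Kneser graph H(n,k) = K_2 × K(n,k). -/
/-- The involution on `ℕ` swapping `2j ↔ 2j+1` for `j < i`. -/
def sigmaNat (i : ℕ) (x : ℕ) : ℕ :=
  if x < 2 * i then (if x % 2 = 0 then x + 1 else x - 1) else x

lemma sigmaNat_invol (i : ℕ) : Function.Involutive (sigmaNat i) := by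
  intro x; unfold sigmaNat; split_ifs <;> omega

/-- `sigmaNat` restricted to `Fin n` (the identity in the out-of-range degenerate case,
which never occurs when `2 * i ≤ n`). -/
def sigmaFinFun (n i : ℕ) (x : Fin n) : Fin n :=
  if h : sigmaNat i x.val < n then ⟨sigmaNat i x.val, h⟩ else x

lemma sigmaFinFun_invol (n i : ℕ) : Function.Involutive (sigmaFinFun n i) := by
  intro x
  unfold sigmaFinFun
  by_cases h : sigmaNat i x.val < n
  · rw [dif_pos h]
    have h2 : sigmaNat i ((⟨sigmaNat i x.val, h⟩ : Fin n) : ℕ) < n := by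
      show sigmaNat i (sigmaNat i x.val) < n
      rw [sigmaNat_invol]; exact x.isLt
    rw [dif_pos h2]
    ext
    exact sigmaNat_invol i x.val
  · rw [dif_neg h, dif_neg h]

/-- The permutation `σ_i = (1 2)(3 4)⋯(2i-1 2i)` of `[n]`, in `0`-indexed form on `Fin n`:
it swaps `2j ↔ 2j+1` for `j < i` and fixes everything else (assuming `2 * i ≤ n`). -/
def sigmaPerm (n i : ℕ) : Equiv.Perm (Fin n) :=
  Function.Involutive.toPerm _ (sigmaFinFun_invol n i)

/-- The Kneser graph `K(n,k)`: vertices are the `k`-subsets of `[n]`, two subsets being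
adjacent iff they are disjoint. -/
def kneserGraph (n k : ℕ) : SimpleGraph {s : Finset (Fin n) // s.card = k} where
  Adj v w := v ≠ w ∧ Disjoint v.1 w.1
  symm := ⟨fun _ _ h => ⟨h.1.symm, h.2.symm⟩⟩
  loopless := ⟨fun _ h => h.1 rfl⟩

/-- The graph `G_i(n,k)`: vertices are the `k`-subsets of `[n]`, with `v` adjacent to `w`
iff `v ∩ σ_i(w) = ∅`. -/
def GGraph (n k i : ℕ) : SimpleGraph {s : Finset (Fin n) // s.card = k} where
  Adj v w := v ≠ w ∧ Disjoint v.1 (w.1.image (sigmaPerm n i))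
  symm := by
    refine ⟨?_⟩
    rintro v w ⟨h1, h2⟩
    refine ⟨h1.symm, ?_⟩
    rw [Finset.disjoint_left] at h2 ⊢
    intro a haw hav
    rcases Finset.mem_image.mp hav with ⟨b, hbv, hba⟩
    refine h2 hbv (Finset.mem_image.mpr ⟨a, haw, ?_⟩)
    rw [← hba]
    exact (sigmaFinFun_invol n i) b
  loopless := ⟨fun _ h => h.1 rfl⟩

/-- The Kronecker cover `K₂ × G`: vertex set `{0,1} × V(G)`, with `(a,v)` adjacent to
`(b,w)` iff `a ≠ b` and `v` is adjacent to `w` in `G`. -/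
def kroneckerCover {V : Type*} (G : SimpleGraph V) : SimpleGraph (Fin 2 × V) where
  Adj x y := x.1 ≠ y.1 ∧ G.Adj x.2 y.2
  symm := ⟨fun _ _ h => ⟨h.1.symm, h.2.symm⟩⟩
  loopless := ⟨fun _ h => h.1 rfl⟩

lemma not_disjoint_self_image (n k i : ℕ) (hn : 2 * k < n) (hi : i < k)
    (s : Finset (Fin n)) (hs : s.card = k) :
    ¬ Disjoint s (s.image (sigmaPerm n i)) := by
  intro hdisj
  by_cases hall : ∀ x ∈ s, (x : ℕ) < 2 * i
  · obtain ⟨x, hx, y, hy, hxy, hf⟩ := Finset.exists_ne_map_eq_of_card_lt_of_maps_to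
      (s := s) (t := Finset.range i) (f := fun x : Fin n => (x : ℕ) / 2)
      (by simp only [Finset.card_range, hs]; exact hi)
      (by intro x hx; show (x : ℕ) / 2 ∈ Finset.range i; simp only [Finset.mem_range]; have := hall x hx; omega)
    have hxlt := hall x hx
    have hylt := hall y hy
    have hval : (x : ℕ) ≠ (y : ℕ) := fun h => hxy (Fin.ext h)
    have hσ : sigmaFinFun n i y = x := by
      have h1 : sigmaNat i (y : ℕ) = (x : ℕ) := by
        unfold sigmaNat; split_ifs <;> omega
      unfold sigmaFinFun
      rw [dif_pos (by rw [h1]; exact x.isLt)]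
      exact Fin.ext h1
    exact Finset.disjoint_left.mp hdisj hx (Finset.mem_image.mpr ⟨y, hy, hσ⟩)
  · push_neg at hall
    obtain ⟨x, hx, hge⟩ := hall
    have hσ : sigmaFinFun n i x = x := by
      have h1 : sigmaNat i (x : ℕ) = (x : ℕ) := by
        unfold sigmaNat; split_ifs <;> omega
      unfold sigmaFinFun
      rw [dif_pos (by rw [h1]; exact x.isLt)]
      exact Fin.ext h1
    exact Finset.disjoint_left.mp hdisj hx (Finset.mem_image.mpr ⟨x, hx, hσ⟩)

/-- the action of `σ_i` on `k`-subsets. -/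
def setMap (n k i : ℕ) (s : {s : Finset (Fin n) // s.card = k}) :
    {s : Finset (Fin n) // s.card = k} :=
  ⟨s.1.image (sigmaPerm n i), by
    rw [Finset.card_image_of_injective _ (Equiv.injective _), s.2]⟩

lemma setMap_invol (n k i : ℕ) : Function.Involutive (setMap n k i) := by
  intro s
  apply Subtype.ext
  show (s.1.image (sigmaPerm n i)).image (sigmaPerm n i) = s.1
  rw [Finset.image_image,
    show ((sigmaPerm n i) ∘ (sigmaPerm n i) : Fin n → Fin n) = id from
      funext (sigmaFinFun_invol n i), Finset.image_id]

lemma adj_equiv (n k i : ℕ) (hn : 2 * k < n) (hk : 1 ≤ k) (hi : i < k)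
    (v w : {s : Finset (Fin n) // s.card = k}) :
    (kneserGraph n k).Adj v (setMap n k i w) ↔ (GGraph n k i).Adj v w := by
  constructor
  · rintro ⟨hne, hd⟩
    refine ⟨?_, hd⟩
    rintro rfl
    exact not_disjoint_self_image n k i hn hi v.1 v.2 hd
  · rintro ⟨hne, hd⟩
    refine ⟨?_, hd⟩
    intro h
    have hvs : v.1 = w.1.image (sigmaPerm n i) := congrArg Subtype.val h
    rw [hvs] at hd
    have hempty : w.1.image (sigmaPerm n i) = ∅ := by
      simpa using disjoint_self.mp hd
    have hc := Finset.card_image_of_injective w.1 (Equiv.injective (sigmaPerm n i))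
    rw [hempty, w.2, Finset.card_empty] at hc
    omega

/-- for `n > 2k`, `k ≥ 1` and `0 ≤ i < k`, the Kronecker cover
`K₂ × G_i(n,k)` is isomorphic to the bipartite Kneser graph `H(n,k) = K₂ × K(n,k)`. -/
theorem kroneckerCover_GGraph_iso_bipartiteKneser (n k i : ℕ)
    (hn : 2 * k < n) (hk : 1 ≤ k) (hi : i < k) :
    Nonempty (kroneckerCover (GGraph n k i) ≃g kroneckerCover (kneserGraph n k)) := by
  classical
  set V := {s : Finset (Fin n) // s.card = k}
  let f : Fin 2 × V → Fin 2 × V :=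
    fun p => (p.1, if p.1 = 0 then p.2 else setMap n k i p.2)
  have hf : Function.Involutive f := by
    rintro ⟨a, v⟩
    by_cases h : a = 0 <;> simp [f, h, setMap_invol n k i v]
  refine ⟨⟨Function.Involutive.toPerm f hf, ?_⟩⟩
  rintro ⟨a, v⟩ ⟨b, w⟩
  show (kroneckerCover (kneserGraph n k)).Adj (f (a, v)) (f (b, w)) ↔
    (kroneckerCover (GGraph n k i)).Adj (a, v) (b, w)
  have key := adj_equiv n k i hn hk hi
  fin_cases a <;> fin_cases b <;> simp [kroneckerCover, f]
  · exact key v w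
  · rw [(kneserGraph n k).adj_comm, (GGraph n k i).adj_comm]
    exact key w v
end

section
/- Let X and Y be bigraphs with 2-colorings ε_X, ε_Y, and let α and β be odd involutions of X and Y respectively such that no vertex x of X is adjacent to α(x) and no vertex y of Y is adjacent to β(y). For every graph homomorphism f : X/α → Y/β there is a unique even graph homomorphism f̃ : X → Y (i.e. ε_Y ∘ f̃ = ε_X) such that π_Y ∘ f̃ = f ∘ π_X. Moreover, if f is an isomorphism, then f̃ is an isomorphism. -/
/-- The setoid on vertices whose classes are the orbits `{x, α x}` of an involution `α`. -/
def orbitSetoid {V : Type*} (α : Equiv.Perm V) (hinv : ∀ x, α (α x) = x) : Setoid V where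
  r x y := y = x ∨ y = α x
  iseqv := by
    refine ⟨fun x => Or.inl rfl, ?_, ?_⟩
    · rintro x y (rfl | rfl)
      · exact Or.inl rfl
      · exact Or.inr (hinv x).symm
    · rintro x y z (rfl | rfl) (rfl | rfl)
      · exact Or.inl rfl
      · exact Or.inr rfl
      · exact Or.inr rfl
      · exact Or.inl (hinv x)

/-- The quotient graph `X/α` of a graph `X` by an involution `α` such that no vertex is
adjacent to its image: vertices are the orbits `{x, α x}`, two orbits being adjacent iff
some element of one is adjacent in `X` to some element of the other. -/
def quotGraph {V : Type*} (X : SimpleGraph V) (α : Equiv.Perm V)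
    (hinv : ∀ x, α (α x) = x) (hns : ∀ x, ¬ X.Adj x (α x)) :
    SimpleGraph (Quotient (orbitSetoid α hinv)) where
  Adj a b := ∃ x y, Quotient.mk (orbitSetoid α hinv) x = a ∧
    Quotient.mk (orbitSetoid α hinv) y = b ∧ X.Adj x y
  symm := by constructor; rintro a b ⟨x, y, hx, hy, h⟩; exact ⟨y, x, hy, hx, h.symm⟩
  loopless := by
    constructor
    rintro a ⟨x, y, hx, hy, h⟩
    rw [← hx] at hy
    rcases Quotient.exact hy with (h2 | h2)
    · subst h2; exact X.loopless.irrefl _ h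
    · subst h2; exact hns y (X.symm.symm _ _ h)

private lemma fin2_eq_of_ne : ∀ {a b c : Fin 2}, a ≠ b → c ≠ b → a = c := by decide

/-- Existence of the even lift. -/
theorem lift_aux {V W : Type*} (X : SimpleGraph V) (Y : SimpleGraph W)
    (εX : V → Fin 2) (hεX : ∀ a b, X.Adj a b → εX a ≠ εX b)
    (εY : W → Fin 2) (hεY : ∀ a b, Y.Adj a b → εY a ≠ εY b)
    (α : Equiv.Perm V) (hαinv : ∀ x, α (α x) = x)
    (hαns : ∀ x, ¬ X.Adj x (α x))
    (β : Equiv.Perm W) (hβaut : ∀ a b, Y.Adj (β a) (β b) ↔ Y.Adj a b)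
    (hβinv : ∀ y, β (β y) = y) (hβodd : ∀ y, εY (β y) ≠ εY y)
    (hβns : ∀ y, ¬ Y.Adj y (β y))
    (f : quotGraph X α hαinv hαns →g quotGraph Y β hβinv hβns) :
    ∃ g : X →g Y, (∀ x, εY (g x) = εX x) ∧
        ∀ x, Quotient.mk (orbitSetoid β hβinv) (g x) =
          f (Quotient.mk (orbitSetoid α hαinv) x) := by
  classical
  have key : ∀ x, ∃ w, εY w = εX x ∧
      Quotient.mk (orbitSetoid β hβinv) w = f (Quotient.mk (orbitSetoid α hαinv) x) := by
    intro x
    by_cases hc : εY (Quotient.out (f (Quotient.mk (orbitSetoid α hαinv) x))) = εX x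
    · exact ⟨_, hc, Quotient.out_eq _⟩
    · refine ⟨β (Quotient.out (f (Quotient.mk (orbitSetoid α hαinv) x))),
        fin2_eq_of_ne (hβodd _) (Ne.symm hc), ?_⟩
      exact (Quotient.sound (Or.inr rfl)).symm.trans (Quotient.out_eq _)
  choose g heven hmk using key
  have hadj : ∀ a b, X.Adj a b → Y.Adj (g a) (g b) := by
    intro a b hab
    have hq : (quotGraph Y β hβinv hβns).Adj (f (Quotient.mk (orbitSetoid α hαinv) a))
        (f (Quotient.mk (orbitSetoid α hαinv) b)) :=
      f.map_adj ⟨a, b, rfl, rfl, hab⟩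
    obtain ⟨u, v, hu, hv, huv⟩ := hq
    have hga : g a = u ∨ g a = β u := Quotient.exact (hu.trans (hmk a).symm)
    have hgb : g b = v ∨ g b = β v := Quotient.exact (hv.trans (hmk b).symm)
    have hcol : εY (g a) ≠ εY (g b) := by
      rw [heven a, heven b]; exact hεX a b hab
    rcases hga with hga | hga <;> rcases hgb with hgb | hgb
    · rw [hga, hgb]; exact huv
    · exact absurd (fin2_eq_of_ne (hεY u v huv) (hβodd v)) (by rw [← hga, ← hgb]; exact hcol)
    · exact absurd (fin2_eq_of_ne (hβodd u) (Ne.symm (hεY u v huv))) (by rw [← hga, ← hgb]; exact hcol)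
    · rw [hga, hgb]; exact (hβaut u v).mpr huv
  exact ⟨⟨g, fun h => hadj _ _ h⟩, heven, hmk⟩

/-- Uniqueness of the even lift (pointwise). -/
theorem lift_unique_aux {V W : Type*} (X : SimpleGraph V) (Y : SimpleGraph W)
    (εX : V → Fin 2) (εY : W → Fin 2)
    (α : Equiv.Perm V) (hαinv : ∀ x, α (α x) = x)
    (hαns : ∀ x, ¬ X.Adj x (α x))
    (β : Equiv.Perm W) (hβinv : ∀ y, β (β y) = y) (hβodd : ∀ y, εY (β y) ≠ εY y)
    (hβns : ∀ y, ¬ Y.Adj y (β y))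
    (f : quotGraph X α hαinv hαns →g quotGraph Y β hβinv hβns)
    (g g' : X →g Y)
    (hg : (∀ x, εY (g x) = εX x) ∧
        ∀ x, Quotient.mk (orbitSetoid β hβinv) (g x) =
          f (Quotient.mk (orbitSetoid α hαinv) x))
    (hg' : (∀ x, εY (g' x) = εX x) ∧
        ∀ x, Quotient.mk (orbitSetoid β hβinv) (g' x) =
          f (Quotient.mk (orbitSetoid α hαinv) x)) :
    ∀ x, g' x = g x := by
  intro x
  have h : g' x = g x ∨ g' x = β (g x) :=
    Quotient.exact ((hg.2 x).trans (hg'.2 x).symm)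
  rcases h with h | h
  · exact h
  · exfalso
    apply hβodd (g x)
    rw [← h, hg'.1 x, hg.1 x]

/-- every graph homomorphism `f : X/α → Y/β` between quotients of bigraphs by
odd involutions lifts to a unique even graph homomorphism `f̃ : X → Y` with
`π_Y ∘ f̃ = f ∘ π_X`; moreover if `f` is an isomorphism then so is `f̃`. -/
theorem hom_lifts_from_quot {V W : Type*} (X : SimpleGraph V) (Y : SimpleGraph W)
    (εX : V → Fin 2) (hεX : ∀ a b, X.Adj a b → εX a ≠ εX b)
    (εY : W → Fin 2) (hεY : ∀ a b, Y.Adj a b → εY a ≠ εY b)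
    (α : Equiv.Perm V) (hαaut : ∀ a b, X.Adj (α a) (α b) ↔ X.Adj a b)
    (hαinv : ∀ x, α (α x) = x) (hαodd : ∀ x, εX (α x) ≠ εX x)
    (hαns : ∀ x, ¬ X.Adj x (α x))
    (β : Equiv.Perm W) (hβaut : ∀ a b, Y.Adj (β a) (β b) ↔ Y.Adj a b)
    (hβinv : ∀ y, β (β y) = y) (hβodd : ∀ y, εY (β y) ≠ εY y)
    (hβns : ∀ y, ¬ Y.Adj y (β y))
    (f : quotGraph X α hαinv hαns →g quotGraph Y β hβinv hβns) :
    (∃! g : X →g Y, (∀ x, εY (g x) = εX x) ∧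
        ∀ x, Quotient.mk (orbitSetoid β hβinv) (g x) =
          f (Quotient.mk (orbitSetoid α hαinv) x)) ∧
    ((∃ e : quotGraph X α hαinv hαns ≃g quotGraph Y β hβinv hβns, ∀ a, e a = f a) →
      ∀ g : X →g Y,
        ((∀ x, εY (g x) = εX x) ∧
          ∀ x, Quotient.mk (orbitSetoid β hβinv) (g x) =
            f (Quotient.mk (orbitSetoid α hαinv) x)) →
        ∃ e' : X ≃g Y, ∀ x, e' x = g x) := by
  obtain ⟨g0, hg0e, hg0c⟩ := lift_aux X Y εX hεX εY hεY α hαinv hαns β hβaut hβinv hβodd hβns f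
  constructor
  · exact ⟨g0, ⟨hg0e, hg0c⟩, fun g' hg' => DFunLike.ext g' g0
      (lift_unique_aux X Y εX εY α hαinv hαns β hβinv hβodd hβns f g0 g' ⟨hg0e, hg0c⟩ hg')⟩
  · rintro ⟨e, he⟩ g ⟨hge, hgc⟩
    obtain ⟨h, hhe, hhc⟩ :=
      lift_aux Y X εY hεY εX hεX β hβinv hβns α hαaut hαinv hαodd hαns e.symm.toHom
    have hli : Function.LeftInverse ⇑h ⇑g := by
      intro x
      have hmk : Quotient.mk (orbitSetoid α hαinv) (h (g x)) =
          Quotient.mk (orbitSetoid α hαinv) x := by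
        rw [hhc (g x), hgc x, ← he (Quotient.mk (orbitSetoid α hαinv) x)]
        exact e.symm_apply_apply _
      rcases Quotient.exact hmk with h1 | h1
      · exact h1.symm
      · exfalso
        apply hαodd (h (g x))
        rw [← h1, hhe (g x), hge x]
    have hri : Function.RightInverse ⇑h ⇑g := by
      intro y
      have hmk : Quotient.mk (orbitSetoid β hβinv) (g (h y)) =
          Quotient.mk (orbitSetoid β hβinv) y := by
        rw [hgc (h y), ← he (Quotient.mk (orbitSetoid α hαinv) (h y)), hhc y]
        exact e.apply_symm_apply _
      rcases Quotient.exact hmk with h1 | h1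
      · exact h1.symm
      · exfalso
        apply hβodd (g (h y))
        rw [← h1, hge (h y), hhe y]
    refine ⟨⟨⟨⇑g, ⇑h, hli, hri⟩, ?_⟩, fun x => rfl⟩
    intro a b
    constructor
    · intro hab
      have hab' : Y.Adj (g a) (g b) := hab
      have := h.map_adj hab'
      rwa [hli a, hli b] at this
    · exact fun hab => g.map_adj hab
end

section
/- Let X be a bigraph and let α be an odd involution of X such that no vertex x of X is adjacent to α(x). Then the automorphism group Aut(X/α) of the quotient graph is isomorphic to the subgroup of Aut(X) consisting of the even automorphisms of X that commute with α. -/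
/-- The automorphism group of a simple graph, as the subgroup of the permutation group of
its vertices consisting of adjacency-preserving permutations. -/
def graphAut {V : Type*} (G : SimpleGraph V) : Subgroup (Equiv.Perm V) where
  carrier := {π | ∀ a b, G.Adj (π a) (π b) ↔ G.Adj a b}
  one_mem' := fun _ _ => Iff.rfl
  mul_mem' := by
    intro π ρ hπ hρ a b
    simpa [Equiv.Perm.mul_apply] using (hπ (ρ a) (ρ b)).trans (hρ a b)
  inv_mem' := by
    intro π hπ a b
    have := (hπ (π⁻¹ a) (π⁻¹ b)).symm
    simpa using this

/-- The permutations preserving a 2-coloring `ε`, as a subgroup of the permutation group. -/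
def evenSubgroup {V : Type*} (ε : V → Fin 2) : Subgroup (Equiv.Perm V) where
  carrier := {π | ∀ x, ε (π x) = ε x}
  one_mem' := fun _ => rfl
  mul_mem' := by
    intro π ρ hπ hρ x
    simpa [Equiv.Perm.mul_apply] using (hπ (ρ x)).trans (hρ x)
  inv_mem' := by
    intro π hπ x
    have := hπ (π⁻¹ x)
    simpa using this.symm

section AuxAQ

variable {V : Type*}

private lemma fin2_cases (a : Fin 2) : a = 0 ∨ a = 1 := by omega

variable (ε : V → Fin 2) (α : Equiv.Perm V) (hαinv : ∀ x, α (α x) = x)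

lemma mk_alpha (x : V) :
    Quotient.mk (orbitSetoid α hαinv) (α x) = Quotient.mk (orbitSetoid α hαinv) x :=
  (Quotient.sound (Or.inr rfl)).symm

noncomputable def rep0 (q : Quotient (orbitSetoid α hαinv)) : V :=
  if ε q.out = 0 then q.out else α q.out

lemma eps_rep0 (hαodd : ∀ x, ε (α x) ≠ ε x) (q) : ε (rep0 ε α hαinv q) = 0 := by
  unfold rep0
  split
  · assumption
  · next h =>
    rcases fin2_cases (ε q.out) with h0 | h1
    · exact absurd h0 h
    · rcases fin2_cases (ε (α q.out)) with h0 | h1'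
      · exact h0
      · exact absurd (h1'.trans h1.symm) (hαodd _)

lemma mk_rep0 (q) :
    Quotient.mk (orbitSetoid α hαinv) (rep0 ε α hαinv q) = q := by
  unfold rep0
  split
  · exact q.out_eq
  · rw [mk_alpha]; exact q.out_eq

lemma rep0_mk (hαodd : ∀ x, ε (α x) ≠ ε x) (x : V) (hx : ε x = 0) :
    rep0 ε α hαinv (Quotient.mk (orbitSetoid α hαinv) x) = x := by
  have h1 : (orbitSetoid α hαinv).r x (Quotient.mk (orbitSetoid α hαinv) x).out :=
    Quotient.exact ((Quotient.mk (orbitSetoid α hαinv) x).out_eq).symm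
  rcases h1 with h | h
  · rw [rep0, h, if_pos hx]
  · have hne : ε ((Quotient.mk (orbitSetoid α hαinv) x).out) ≠ 0 := by
      rw [h]; intro h0; exact hαodd x (h0.trans hx.symm)
    rw [rep0, if_neg hne, h, hαinv]

noncomputable def lift0 (σ : Equiv.Perm (Quotient (orbitSetoid α hαinv))) (x : V) : V :=
  if ε x = 0 then rep0 ε α hαinv (σ (Quotient.mk (orbitSetoid α hαinv) x))
  else α (rep0 ε α hαinv (σ (Quotient.mk (orbitSetoid α hαinv) x)))

lemma mk_lift0 (σ) (x : V) :
    Quotient.mk (orbitSetoid α hαinv) (lift0 ε α hαinv σ x) =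
      σ (Quotient.mk (orbitSetoid α hαinv) x) := by
  unfold lift0
  split
  · exact mk_rep0 ε α hαinv _
  · rw [mk_alpha]; exact mk_rep0 ε α hαinv _

lemma eps_lift0 (hαodd : ∀ x, ε (α x) ≠ ε x) (σ) (x : V) : ε (lift0 ε α hαinv σ x) = ε x := by
  unfold lift0
  split
  · next h => rw [eps_rep0 ε α hαinv hαodd, h]
  · next h =>
    rcases fin2_cases (ε x) with h0 | h1
    · exact absurd h0 h
    rcases fin2_cases (ε (α (rep0 ε α hαinv (σ (Quotient.mk (orbitSetoid α hαinv) x))))) with h0 | h1'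
    · exact absurd (h0.trans (eps_rep0 ε α hαinv hαodd _).symm) (hαodd _)
    · rw [h1', h1]

lemma lift0_alpha (hαodd : ∀ x, ε (α x) ≠ ε x) (σ) (x : V) :
    lift0 ε α hαinv σ (α x) = α (lift0 ε α hαinv σ x) := by
  by_cases hx : ε x = 0
  · have h2 : ε (α x) ≠ 0 := fun h0 => hαodd x (h0.trans hx.symm)
    rw [lift0, if_neg h2, mk_alpha, lift0, if_pos hx]
  · have h2 : ε (α x) = 0 := by
      rcases fin2_cases (ε (α x)) with h0 | h1
      · exact h0
      · rcases fin2_cases (ε x) with h0 | h1'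
        · exact absurd h0 hx
        · exact absurd (h1.trans h1'.symm) (hαodd x)
    rw [lift0, if_pos h2, mk_alpha, lift0, if_neg hx, hαinv]

lemma lift0_cancel (hαodd : ∀ x, ε (α x) ≠ ε x) (σ τ) (hστ : ∀ q, τ (σ q) = q) (x : V) :
    lift0 ε α hαinv τ (lift0 ε α hαinv σ x) = x := by
  have he := eps_lift0 ε α hαinv hαodd σ x
  have hm := mk_lift0 ε α hαinv σ x
  by_cases hx : ε x = 0
  · rw [lift0, if_pos (he.trans hx), hm, hστ, rep0_mk ε α hαinv hαodd x hx]
  · have h2 : ε (α x) = 0 := by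
      rcases fin2_cases (ε (α x)) with h0 | h1
      · exact h0
      · rcases fin2_cases (ε x) with h0 | h1'
        · exact absurd h0 hx
        · exact absurd (h1.trans h1'.symm) (hαodd x)
    have : ε (lift0 ε α hαinv σ x) ≠ 0 := fun h0 => hx (he.symm.trans h0)
    rw [lift0, if_neg this, hm, hστ, ← mk_alpha α hαinv x,
      rep0_mk ε α hαinv hαodd _ h2, hαinv]

noncomputable def liftPerm (hαodd : ∀ x, ε (α x) ≠ ε x) (σ : Equiv.Perm (Quotient (orbitSetoid α hαinv))) :
    Equiv.Perm V where
  toFun := lift0 ε α hαinv σ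
  invFun := lift0 ε α hαinv σ⁻¹
  left_inv := fun x => lift0_cancel ε α hαinv hαodd σ σ⁻¹ (fun q => σ.symm_apply_apply q) x
  right_inv := fun x => lift0_cancel ε α hαinv hαodd σ⁻¹ σ (fun q => σ.apply_symm_apply q) x

lemma adj_lift0_aux (hαodd : ∀ x, ε (α x) ≠ ε x) (X : SimpleGraph V)
    (hε : ∀ a b, X.Adj a b → ε a ≠ ε b)
    (hαaut : ∀ a b, X.Adj (α a) (α b) ↔ X.Adj a b) (hαns : ∀ x, ¬ X.Adj x (α x)) (σ) (hσ : σ ∈ graphAut (quotGraph X α hαinv hαns))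
    {x y : V} (hx : ε x = 0) (hy : ε y ≠ 0) (h : X.Adj x y) :
    X.Adj (rep0 ε α hαinv (σ (Quotient.mk (orbitSetoid α hαinv) x)))
      (α (rep0 ε α hαinv (σ (Quotient.mk (orbitSetoid α hαinv) y)))) := by
  have hq : (quotGraph X α hαinv hαns).Adj (Quotient.mk (orbitSetoid α hαinv) x)
      (Quotient.mk (orbitSetoid α hαinv) y) := ⟨x, y, rfl, rfl, h⟩
  have hq2 := (hσ _ _).mpr hq
  obtain ⟨u, v, hu, hv, huv⟩ := hq2
  set r := rep0 ε α hαinv (σ (Quotient.mk (orbitSetoid α hαinv) x)) with hr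
  set s := rep0 ε α hαinv (σ (Quotient.mk (orbitSetoid α hαinv) y)) with hs
  have hur : u = r ∨ u = α r := by
    have : (orbitSetoid α hαinv).r r u :=
      Quotient.exact ((mk_rep0 ε α hαinv _).trans hu.symm)
    exact this
  have hvs : v = s ∨ v = α s := by
    have : (orbitSetoid α hαinv).r s v :=
      Quotient.exact ((mk_rep0 ε α hαinv _).trans hv.symm)
    exact this
  have her : ε r = 0 := eps_rep0 ε α hαinv hαodd _
  have hes : ε s = 0 := eps_rep0 ε α hαinv hαodd _
  rcases hur with rfl | rfl <;> rcases hvs with rfl | rfl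
  · exact absurd (her.trans hes.symm) (hε _ _ huv)
  · exact huv
  · have := (hαaut (α r) s).mpr huv
    rwa [hαinv] at this
  · have h2 := (hαaut r s).mp huv
    exact absurd (her.trans hes.symm) (hε _ _ h2)

lemma adj_lift0 (hαodd : ∀ x, ε (α x) ≠ ε x) (X : SimpleGraph V)
    (hε : ∀ a b, X.Adj a b → ε a ≠ ε b)
    (hαaut : ∀ a b, X.Adj (α a) (α b) ↔ X.Adj a b) (hαns : ∀ x, ¬ X.Adj x (α x)) (σ) (hσ : σ ∈ graphAut (quotGraph X α hαinv hαns))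
    {x y : V} (h : X.Adj x y) :
    X.Adj (lift0 ε α hαinv σ x) (lift0 ε α hαinv σ y) := by
  rcases fin2_cases (ε x) with hx | hx
  · have hy : ε y ≠ 0 := fun h0 => hε x y h (hx.trans h0.symm)
    rw [lift0, if_pos hx, lift0, if_neg hy]
    exact adj_lift0_aux ε α hαinv hαodd X hε hαaut hαns σ hσ hx hy h
  · have hy : ε y = 0 := by
      rcases fin2_cases (ε y) with h0 | h1
      · exact h0
      · exact absurd (hx.trans h1.symm) (hε x y h)
    have hx' : ε x ≠ 0 := by rw [hx]; decide
    rw [lift0, if_neg hx', lift0, if_pos hy]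
    exact (adj_lift0_aux ε α hαinv hαodd X hε hαaut hαns σ hσ hy hx' h.symm).symm

def qmap (π : Equiv.Perm V) (hcomm : ∀ x, π (α x) = α (π x)) :
    Equiv.Perm (Quotient (orbitSetoid α hαinv)) :=
  Quotient.congr π <| by
    intro a b
    constructor
    · rintro (rfl | rfl)
      · exact Or.inl rfl
      · exact Or.inr (hcomm a)
    · rintro (h | h)
      · exact Or.inl (π.injective h)
      · exact Or.inr (π.injective (h.trans (hcomm a).symm))

lemma qmap_mk (π : Equiv.Perm V) (hcomm) (x : V) :
    qmap α hαinv π hcomm (Quotient.mk (orbitSetoid α hαinv) x) =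
      Quotient.mk (orbitSetoid α hαinv) (π x) := rfl

lemma adj_qmap_of (X : SimpleGraph V) (hαns : ∀ x, ¬ X.Adj x (α x))
    (π : Equiv.Perm V) (h1 : π ∈ graphAut X) (hcomm)
    {a b} (h : (quotGraph X α hαinv hαns).Adj a b) :
    (quotGraph X α hαinv hαns).Adj (qmap α hαinv π hcomm a) (qmap α hαinv π hcomm b) := by
  obtain ⟨x, y, rfl, rfl, hxy⟩ := h
  exact ⟨π x, π y, (qmap_mk α hαinv π hcomm x).symm, (qmap_mk α hαinv π hcomm y).symm,
    (h1 x y).mpr hxy⟩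

lemma qmap_cancel (π : Equiv.Perm V) (hcomm) (hcomm') (a) :
    qmap α hαinv π⁻¹ hcomm' (qmap α hαinv π hcomm a) = a := by
  induction a using Quotient.ind with
  | _ x => rw [qmap_mk, qmap_mk]; simp

lemma qmap_mem (X : SimpleGraph V) (hαns : ∀ x, ¬ X.Adj x (α x))
    (π : Equiv.Perm V) (h1 : π ∈ graphAut X) (hcomm)
    (hcomm' : ∀ x, π⁻¹ (α x) = α (π⁻¹ x)) :
    qmap α hαinv π hcomm ∈ graphAut (quotGraph X α hαinv hαns) := by
  intro a b
  constructor
  · intro h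
    have h2 := adj_qmap_of α hαinv X hαns π⁻¹ ((graphAut X).inv_mem h1) hcomm' h
    rwa [qmap_cancel, qmap_cancel] at h2
  · exact adj_qmap_of α hαinv X hαns π h1 hcomm

end AuxAQ

/-- for an odd involution `α` of a bigraph `X` with simple quotient, the
automorphism group of `X/α` is isomorphic to the subgroup of `Aut(X)` of even
automorphisms commuting with `α`. -/
theorem aut_quotGraph_iso {V : Type*} (X : SimpleGraph V) (ε : V → Fin 2)
    (hε : ∀ a b, X.Adj a b → ε a ≠ ε b)
    (α : Equiv.Perm V) (hαaut : ∀ a b, X.Adj (α a) (α b) ↔ X.Adj a b)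
    (hαinv : ∀ x, α (α x) = x) (hαodd : ∀ x, ε (α x) ≠ ε x)
    (hαns : ∀ x, ¬ X.Adj x (α x)) :
    Nonempty ((graphAut (quotGraph X α hαinv hαns)) ≃*
      ((graphAut X ⊓ evenSubgroup ε ⊓ Subgroup.centralizer {α}) :
        Subgroup (Equiv.Perm V))) := by
  classical
  set H : Subgroup (Equiv.Perm V) := graphAut X ⊓ evenSubgroup ε ⊓ Subgroup.centralizer {α}
    with hH
  have hmemX : ∀ π : Equiv.Perm V, π ∈ H → π ∈ graphAut X := fun π h =>
    (Subgroup.mem_inf.mp (Subgroup.mem_inf.mp h).1).1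
  have hmemE : ∀ π : Equiv.Perm V, π ∈ H → ∀ x, ε (π x) = ε x := fun π h =>
    (Subgroup.mem_inf.mp (Subgroup.mem_inf.mp h).1).2
  have hmemC : ∀ π : Equiv.Perm V, π ∈ H → ∀ x, π (α x) = α (π x) := by
    intro π h x
    have h3 := (Subgroup.mem_inf.mp h).2
    have := (Subgroup.mem_centralizer_iff.mp h3) α (Set.mem_singleton α)
    have h4 := Equiv.ext_iff.mp this x
    simpa [Equiv.Perm.mul_apply] using h4.symm
  have hcomm_inv : ∀ π : Equiv.Perm V, (∀ x, π (α x) = α (π x)) →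
      ∀ x, π⁻¹ (α x) = α (π⁻¹ x) := by
    intro π hc x
    apply π.injective
    rw [show ∀ y, π (π⁻¹ y) = y from π.apply_symm_apply, hc, show ∀ y, π (π⁻¹ y) = y from π.apply_symm_apply]
  let Φ : H →* graphAut (quotGraph X α hαinv hαns) := MonoidHom.mk'
    (fun π => ⟨qmap α hαinv π.1 (hmemC π.1 π.2),
      qmap_mem α hαinv X hαns π.1 (hmemX π.1 π.2) (hmemC π.1 π.2)
        (hcomm_inv π.1 (hmemC π.1 π.2))⟩)
    (by
      intro π ρ
      apply Subtype.ext
      apply Equiv.ext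
      intro a
      induction a using Quotient.ind with
      | _ x => rfl)
  have hinj : Function.Injective Φ := by
    intro π ρ h
    have h2 : ∀ x : V, Quotient.mk (orbitSetoid α hαinv) (π.1 x) =
        Quotient.mk (orbitSetoid α hαinv) (ρ.1 x) := by
      intro x
      have := Equiv.ext_iff.mp (congrArg Subtype.val h) (Quotient.mk (orbitSetoid α hαinv) x)
      exact this
    apply Subtype.ext
    apply Equiv.ext
    intro x
    rcases (Quotient.exact (h2 x) : (orbitSetoid α hαinv).r (π.1 x) (ρ.1 x)) with h3 | h3
    · exact h3.symm
    · exfalso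
      have e1 : ε (ρ.1 x) = ε x := hmemE ρ.1 ρ.2 x
      have e2 : ε (π.1 x) = ε x := hmemE π.1 π.2 x
      rw [h3] at e1
      exact hαodd _ (e1.trans e2.symm)
  have hsurj : Function.Surjective Φ := by
    rintro ⟨σ, hσ⟩
    set π : Equiv.Perm V := liftPerm ε α hαinv hαodd σ with hπ
    have hπα : ∀ x, π (α x) = α (π x) := fun x => lift0_alpha ε α hαinv hαodd σ x
    have hπX : π ∈ graphAut X := by
      intro a b
      constructor
      · intro h
        have h' : X.Adj (lift0 ε α hαinv σ a) (lift0 ε α hαinv σ b) := h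
        have h2 := adj_lift0 ε α hαinv hαodd X hε hαaut hαns σ⁻¹
          ((graphAut _).inv_mem hσ) h'
        have e1 : lift0 ε α hαinv σ⁻¹ (lift0 ε α hαinv σ a) = a :=
          lift0_cancel ε α hαinv hαodd σ σ⁻¹ (fun q => σ.symm_apply_apply q) a
        have e2 : lift0 ε α hαinv σ⁻¹ (lift0 ε α hαinv σ b) = b :=
          lift0_cancel ε α hαinv hαodd σ σ⁻¹ (fun q => σ.symm_apply_apply q) b
        rwa [e1, e2] at h2
      · exact adj_lift0 ε α hαinv hαodd X hε hαaut hαns σ hσ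
    have hπE : π ∈ evenSubgroup ε := fun x => eps_lift0 ε α hαinv hαodd σ x
    have hπC : π ∈ Subgroup.centralizer {α} := by
      rw [Subgroup.mem_centralizer_iff]
      rintro g hg
      rcases hg with rfl
      apply Equiv.ext
      intro x
      simp only [Equiv.Perm.mul_apply]
      exact (hπα x).symm
    have hπH : π ∈ H := Subgroup.mem_inf.mpr ⟨Subgroup.mem_inf.mpr ⟨hπX, hπE⟩, hπC⟩
    refine ⟨⟨π, hπH⟩, ?_⟩
    apply Subtype.ext
    apply Equiv.ext
    intro a
    induction a using Quotient.ind with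
    | _ x =>
      show Quotient.mk (orbitSetoid α hαinv) (π x) = σ (Quotient.mk (orbitSetoid α hαinv) x)
      exact mk_lift0 ε α hαinv σ x
  exact ⟨(MulEquiv.ofBijective Φ ⟨hinj, hsurj⟩).symm⟩
end

section
/- Let G be a simple graph such that every automorphism of K_2 × G is of the form c × f for some automorphism c of K_2 and some automorphism f of G, and let α', β' be involutive automorphisms of G. Then τ × α' and τ × β' are evenly conjugate in K_2 × G (i.e. there is an even automorphism h of K_2 × G with h ∘ (τ × α') = (τ × β') ∘ h) if and only if α' and β' are conjugate in Aut(G), i.e. there is an automorphism f of G with f ∘ α' = β' ∘ f. -/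
/-- if every automorphism of `K₂ × G` is of the form `c × f`, then for
involutive automorphisms `α'`, `β'` of `G`, the odd involutions `τ × α'` and `τ × β'`
are evenly conjugate in `K₂ × G` iff `α'` and `β'` are conjugate in `Aut(G)`. -/
theorem tau_prod_evenly_conjugate_iff {V : Type*} (G : SimpleGraph V)
    (hsurj : ∀ π ∈ graphAut (kroneckerCover G),
      ∃ (c : Equiv.Perm (Fin 2)) (f : Equiv.Perm V),
        f ∈ graphAut G ∧ π = Equiv.prodCongr c f)
    (α' β' : Equiv.Perm V) (hα' : α' ∈ graphAut G) (hβ' : β' ∈ graphAut G)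
    (hαinv : ∀ v, α' (α' v) = v) (hβinv : ∀ v, β' (β' v) = v) :
    (∃ h : Equiv.Perm (Fin 2 × V), h ∈ graphAut (kroneckerCover G) ∧
        (∀ p : Fin 2 × V, (h p).1 = p.1) ∧
        h * Equiv.prodCongr (Equiv.swap (0 : Fin 2) 1) α' =
          Equiv.prodCongr (Equiv.swap (0 : Fin 2) 1) β' * h) ↔
    (∃ f : Equiv.Perm V, f ∈ graphAut G ∧ f * α' = β' * f) := by
  constructor
  · rintro ⟨h, hmem, heven, hcomm⟩
    obtain ⟨c, f, hf, rfl⟩ := hsurj h hmem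
    refine ⟨f, hf, Equiv.ext fun v => ?_⟩
    have := congrArg (fun π : Equiv.Perm (Fin 2 × V) => (π (0, v)).2) hcomm
    simpa [Equiv.Perm.mul_apply] using this
  · rintro ⟨f, hf, hcomm⟩
    refine ⟨Equiv.prodCongr 1 f, ?_, fun p => rfl, ?_⟩
    · intro a b
      show (a.1 ≠ b.1 ∧ G.Adj (f a.2) (f b.2)) ↔ (a.1 ≠ b.1 ∧ G.Adj a.2 b.2)
      rw [hf a.2 b.2]
    · ext p
      · rfl
      · exact Equiv.ext_iff.mp hcomm p.2
end

section
/- Let G and H be simple graphs such that the Kronecker covers K_2 × G and K_2 × H are isomorphic. Then the neighborhood complexes N(G) and N(H) are isomorphic; concretely, there is a bijection φ from the set of non-isolated vertices of G to the set of non-isolated vertices of H such that for every nonempty finite set S of vertices of G, the elements of S have a common neighbor in G if and only if the elements of the image set φ(S) have a common neighbor in H. -/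
lemma exists_alternating_set {Q : Type*} (s p : Equiv.Perm Q) (R : Q → Q → Prop)
    (hR : Equivalence R)
    (hs2 : ∀ x, s (s x) = x) (hp2 : ∀ x, p (p x) = x)
    (hsR : ∀ x y, R x y → R (s x) (s y)) (hpR : ∀ x y, R x y → R (p x) (p y))
    (hs : ∀ x, ¬ R (s x) x) (hp : ∀ x, ¬ R (p x) x) :
    ∃ M : Set Q, (∀ x, x ∈ M ↔ s x ∉ M) ∧ (∀ x, x ∈ M ↔ p x ∉ M) ∧
      (∀ x y, R x y → (x ∈ M ↔ y ∈ M)) := by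
  classical
  set g : Equiv.Perm Q := s.trans p with hgdef
  have hgx : ∀ x, g x = p (s x) := fun x => rfl
  have hginv : ∀ x, g⁻¹ x = s (p x) := by
    intro x
    have h1 : g (s (p x)) = x := by rw [hgx, hs2, hp2]
    have := congrArg (fun y => g⁻¹ y) h1
    simpa using this.symm
  have h1 : ∀ x, s (g x) = g⁻¹ (s x) := by
    intro x; rw [hginv, hgx]
  -- conjugation
  have hconj : ∀ (n : ℤ) (x : Q), s ((g ^ n) x) = (g ^ (-n)) (s x) := by
    intro n
    induction n using Int.induction_on with
    | zero => simp
    | succ k ih =>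
      intro x
      have e1 : (g ^ ((k : ℤ) + 1)) x = (g ^ (k : ℤ)) (g x) := by
        rw [zpow_add_one]; rfl
      rw [e1, ih (g x), h1]
      have e2 : g ^ (-((k : ℤ) + 1)) = g ^ (-(k : ℤ)) * g⁻¹ := by
        rw [← zpow_neg_one, ← zpow_add]; ring_nf
      rw [e2]; rfl
    | pred k ih =>
      intro x
      have e1 : (g ^ (-(k : ℤ) - 1)) x = (g ^ (-(k : ℤ))) (g⁻¹ x) := by
        have : g ^ (-(k : ℤ) - 1) = g ^ (-(k : ℤ)) * g⁻¹ := by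
          rw [← zpow_neg_one, ← zpow_add]; ring_nf
        rw [this]; rfl
      have e3 : s (g⁻¹ x) = g (s x) := by
        rw [hginv, hs2, hgx, hs2]
      rw [e1, ih (g⁻¹ x), e3]
      have e4 : (- -(k:ℤ)) = (k:ℤ) := by ring
      have e5 : (-(-(k:ℤ) - 1)) = (k:ℤ) + 1 := by ring
      rw [e4, e5, zpow_add_one]; rfl
  -- compatibility of g-powers with R
  have hg1 : ∀ x y, R x y → R (g x) (g y) := fun x y h => by
    rw [hgx, hgx]; exact hpR _ _ (hsR _ _ h)
  have hg1' : ∀ x y, R x y → R (g⁻¹ x) (g⁻¹ y) := fun x y h => by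
    rw [hginv, hginv]; exact hsR _ _ (hpR _ _ h)
  have hgcomp : ∀ (n : ℤ) (x y : Q), R x y → R ((g ^ n) x) ((g ^ n) y) := by
    intro n
    induction n using Int.induction_on with
    | zero => simpa using fun x y h => h
    | succ k ih =>
      intro x y h
      have e1 : ∀ z, (g ^ ((k : ℤ) + 1)) z = (g ^ (k : ℤ)) (g z) := by
        intro z; rw [zpow_add_one]; rfl
      rw [e1, e1]; exact ih _ _ (hg1 _ _ h)
    | pred k ih =>
      intro x y h
      have e1 : ∀ z, (g ^ (-(k : ℤ) - 1)) z = (g ^ (-(k : ℤ))) (g⁻¹ z) := by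
        intro z
        have : g ^ (-(k : ℤ) - 1) = g ^ (-(k : ℤ)) * g⁻¹ := by
          rw [← zpow_neg_one, ← zpow_add]; ring_nf
        rw [this]; rfl
      rw [e1, e1]; exact ih _ _ (hg1' _ _ h)
  have comb : ∀ (m n : ℤ) (a b : Q), R ((g ^ n) a) b → R ((g ^ (m + n)) a) ((g ^ m) b) := by
    intro m n a b hab
    have := hgcomp m _ _ hab
    rwa [← Equiv.Perm.mul_apply, ← zpow_add] at this
  have cancel : ∀ (n : ℤ) (a : Q), (g ^ (-n)) ((g ^ n) a) = a := by
    intro n a; rw [← Equiv.Perm.mul_apply, ← zpow_add]; simp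
  have cancel2 : ∀ (n : ℤ) (a : Q), (g ^ n) ((g ^ (-n)) a) = a := by
    intro n a; simpa using cancel (-n) a
  -- key freeness lemma
  have keyN : ∀ (k : ℕ) (x : Q), ¬ R ((g ^ k) x) (s x) := by
    intro k
    induction k using Nat.strong_induction_on with
    | _ k ih =>
      match k with
      | 0 => intro x h; exact hs x (hR.symm (by simpa using h))
      | 1 =>
        intro x h
        rw [pow_one, hgx] at h
        exact hp (s x) h
      | (k+2) =>
        intro x h
        apply ih k (by omega) (g x)
        have h2 : R (g⁻¹ ((g ^ (k+2)) x)) (g⁻¹ (s x)) := hg1' _ _ h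
        have e1 : g⁻¹ ((g ^ (k+2)) x) = (g ^ (k+1)) x := by
          have e : (g ^ (k+2)) x = g ((g ^ (k+1)) x) := by
            rw [pow_succ']; rfl
          rw [e]; simp
        have e2 : g⁻¹ (s x) = s (g x) := (h1 x).symm
        rw [e1, e2] at h2
        have e3 : (g ^ (k+1)) x = (g ^ k) (g x) := by rw [pow_succ]; rfl
        rwa [e3] at h2
  have keyZ : ∀ (n : ℤ) (x : Q), ¬ R ((g ^ n) x) (s x) := by
    intro n x h
    rcases le_or_gt 0 n with hn | hn
    · lift n to ℕ using hn
      rw [zpow_natCast] at h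
      exact keyN n x h
    · have h2 : R (s ((g ^ n) x)) (s (s x)) := hsR _ _ h
      rw [hs2, hconj n x] at h2
      have h3 : R ((g ^ (-n)) (s x)) (s (s x)) := by rw [hs2]; exact h2
      have hn' : 0 ≤ -n := by omega
      obtain ⟨m, hm⟩ : ∃ m : ℕ, -n = (m : ℤ) := ⟨(-n).toNat, (Int.toNat_of_nonneg hn').symm⟩
      rw [hm, zpow_natCast] at h3
      exact keyN m (s x) h3
  -- the setoid
  set rel : Q → Q → Prop := fun x y => ∃ n : ℤ, R ((g ^ n) x) y ∨ R ((g ^ n) (s x)) y with hreldef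
  have hrel_refl : ∀ x, rel x x := fun x => ⟨0, Or.inl (by simpa using hR.refl x)⟩
  have hrel_symm : ∀ {x y}, rel x y → rel y x := by
    rintro x y ⟨n, h | h⟩
    · have h2 := comb (-n) n x y h
      simp only [neg_add_cancel, zpow_zero, Equiv.Perm.coe_one, id_eq] at h2
      exact ⟨-n, Or.inl (hR.symm h2)⟩
    · have h2 := comb (-n) n (s x) y h
      simp only [neg_add_cancel, zpow_zero, Equiv.Perm.coe_one, id_eq] at h2
      -- h2 : R (s x) ((g ^ (-n)) y)
      have h3 := hsR _ _ h2
      rw [hs2, hconj (-n) y] at h3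
      simp only [neg_neg] at h3
      exact ⟨n, Or.inr (hR.symm h3)⟩
  have hrel_trans : ∀ {x y z}, rel x y → rel y z → rel x z := by
    rintro x y z ⟨n, hxy⟩ ⟨m, hyz⟩
    rcases hxy with h | h <;> rcases hyz with h' | h'
    · exact ⟨m + n, Or.inl (hR.trans (comb m n x y h) h')⟩
    · have h2 : R ((g ^ (-n)) (s x)) (s y) := by
        have := hsR _ _ h; rwa [hconj n x] at this
      exact ⟨m + -n, Or.inr (hR.trans (comb m (-n) (s x) (s y) h2) h')⟩
    · exact ⟨m + n, Or.inr (hR.trans (comb m n (s x) y h) h')⟩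
    · have h2 : R ((g ^ (-n)) x) (s y) := by
        have := hsR _ _ h; rwa [hconj n (s x), hs2] at this
      exact ⟨m + -n, Or.inl (hR.trans (comb m (-n) x (s y) h2) h')⟩
  set st : Setoid Q := ⟨rel, ⟨hrel_refl, hrel_symm, hrel_trans⟩⟩ with hstdef
  set rep : Q → Q := fun x => Quotient.out (Quotient.mk st x) with hrepdef
  have hrep1 : ∀ x, rel (rep x) x := by
    intro x
    exact Quotient.exact (Quotient.out_eq (Quotient.mk st x))
  have hrep2 : ∀ {x y}, rel x y → rep x = rep y := by
    intro x y h
    simp only [hrepdef]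
    congr 1
    exact Quotient.sound h
  set M : Set Q := {x | ∃ n : ℤ, R ((g ^ n) (rep x)) x} with hMdef
  -- membership lemmas
  have memg : ∀ (n : ℤ) (x : Q), ((g ^ n) x ∈ M ↔ x ∈ M) := by
    intro n x
    have hxy : rel x ((g ^ n) x) := ⟨n, Or.inl (hR.refl _)⟩
    have hrr : rep ((g ^ n) x) = rep x := (hrep2 hxy).symm
    constructor
    · rintro ⟨m, hm⟩
      rw [hrr] at hm
      have h2 := comb (-n) m (rep x) _ hm
      rw [cancel] at h2
      exact ⟨-n + m, h2⟩
    · rintro ⟨m, hm⟩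
      exact ⟨n + m, by rw [hrr]; exact comb n m (rep x) x hm⟩
  have mems : ∀ x, (s x ∈ M ↔ x ∉ M) := by
    intro x
    have hsx : rel x (s x) := ⟨0, Or.inr (by simpa using hR.refl (s x))⟩
    have hrr : rep (s x) = rep x := (hrep2 hsx).symm
    constructor
    · rintro ⟨m, hm⟩ ⟨n, hn⟩
      rw [hrr] at hm
      have h2 : R ((g ^ (-n)) (s (rep x))) (s x) := by
        have := hsR _ _ hn; rwa [hconj n (rep x)] at this
      have h3 : R ((g ^ m) (rep x)) ((g ^ (-n)) (s (rep x))) := hR.trans hm (hR.symm h2)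
      have h4 := comb n m (rep x) _ h3
      rw [cancel2] at h4
      exact keyZ (n + m) (rep x) h4
    · intro hx
      rcases hrep1 x with ⟨m, hm | hm⟩
      · exact absurd ⟨m, hm⟩ hx
      · have h2 := hsR _ _ hm
        rw [hconj m (s (rep x)), hs2] at h2
        exact ⟨-m, by rw [hrr]; exact h2⟩
  have memp : ∀ x, (p x ∈ M ↔ x ∉ M) := by
    intro x
    have e : p x = s (g⁻¹ x) := by rw [hginv, hs2]
    have e2 : g⁻¹ x = (g ^ (-1 : ℤ)) x := by rw [zpow_neg_one]
    rw [e, mems (g⁻¹ x)]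
    constructor
    · intro h h'
      exact h (by rw [e2]; exact (memg (-1) x).mpr h')
    · intro h h'
      rw [e2] at h'
      exact h ((memg (-1) x).mp h')
  have sat : ∀ x y, R x y → (x ∈ M ↔ y ∈ M) := by
    intro x y h
    have hxy : rel x y := ⟨0, Or.inl (by simpa using h)⟩
    have hrr : rep y = rep x := (hrep2 hxy).symm
    constructor
    · rintro ⟨n, hn⟩; exact ⟨n, by rw [hrr]; exact hR.trans hn h⟩
    · rintro ⟨n, hn⟩; rw [hrr] at hn; exact ⟨n, hR.trans hn (hR.symm h)⟩
  refine ⟨M, fun x => ?_, fun x => ?_, sat⟩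
  · have := mems x
    constructor
    · intro h h'; exact (this.mp h') h
    · intro h; by_contra h'; exact h (this.mpr h')
  · have := memp x
    constructor
    · intro h h'; exact (this.mp h') h
    · intro h; by_contra h'; exact h (this.mpr h')

section Aux

lemma fin2a : ∀ a : Fin 2, a + 1 ≠ a := by decide
lemma fin2b : ∀ a : Fin 2, a + 1 + 1 = a := by decide
lemma fin2c : ∀ a b c : Fin 2, ¬ a = b → ¬ a = c → b = c := by decide
lemma fin2d : ∀ a b : Fin 2, ¬ a = b → b = a + 1 := by decide

variable {V : Type*} {G : SimpleGraph V}

/-- the "share a common neighbor" relation on the Kronecker cover -/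
def shr (G : SimpleGraph V) (x y : Fin 2 × V) : Prop :=
  ∃ z, (kroneckerCover G).Adj z x ∧ (kroneckerCover G).Adj z y

lemma shr_symm : ∀ {x y}, shr G x y → shr G y x := by
  rintro x y ⟨z, h1, h2⟩; exact ⟨z, h2, h1⟩

lemma shr_fst {x y} (h : shr G x y) : x.1 = y.1 := by
  obtain ⟨z, h1, h2⟩ := h
  exact fin2c z.1 x.1 y.1 h1.1 h2.1

/-- reachability in the share relation -/
def RR (G : SimpleGraph V) : (Fin 2 × V) → (Fin 2 × V) → Prop :=
  Relation.ReflTransGen (shr G)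

lemma RR_equiv : Equivalence (RR G) := by
  refine ⟨fun x => Relation.ReflTransGen.refl, ?_, fun h1 h2 => h1.trans h2⟩
  intro x y h
  induction h with
  | refl => exact Relation.ReflTransGen.refl
  | tail h1 h2 ih => exact Relation.ReflTransGen.head (shr_symm h2) ih

lemma RR_fst {x y} (h : RR G x y) : x.1 = y.1 := by
  induction h with
  | refl => rfl
  | tail h1 h2 ih => exact ih.trans (shr_fst h2)

end Aux

/-- if `K₂ × G ≅ K₂ × H`, then the neighborhood complexes of `G` and `H`
are isomorphic: there is a bijection `φ` between the non-isolated vertices such that a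
nonempty finite set of vertices of `G` has a common neighbor iff its image under `φ`
has a common neighbor in `H`. -/
theorem neighborhood_complex_iso_of_kroneckerCover_iso {V W : Type*}
    (G : SimpleGraph V) (H : SimpleGraph W)
    (h : Nonempty (kroneckerCover G ≃g kroneckerCover H)) :
    ∃ φ : {v : V // ∃ u, G.Adj v u} ≃ {w : W // ∃ u, H.Adj w u},
      ∀ S : Finset {v : V // ∃ u, G.Adj v u}, S.Nonempty →
        ((∃ c, ∀ v ∈ S, G.Adj c v.1) ↔ (∃ c, ∀ v ∈ S, H.Adj c (φ v).1)) := by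
  classical
  obtain ⟨f⟩ := h
  have hinvV : Function.Involutive (fun x : Fin 2 × V => (x.1 + 1, x.2)) := by
    intro x; simp [fin2b]
  have hinvW : Function.Involutive (fun x : Fin 2 × W => (x.1 + 1, x.2)) := by
    intro x; simp [fin2b]
  set σ : Equiv.Perm (Fin 2 × V) := hinvV.toPerm with hσdef
  set τ : Equiv.Perm (Fin 2 × W) := hinvW.toPerm with hτdef
  have hσx : ∀ x : Fin 2 × V, σ x = (x.1 + 1, x.2) := fun x => rfl
  have hτx : ∀ x : Fin 2 × W, τ x = (x.1 + 1, x.2) := fun x => rfl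
  set π : Equiv.Perm (Fin 2 × V) := f.toEquiv.trans (τ.trans f.toEquiv.symm) with hπdef
  have hπx : ∀ x, π x = f.symm (τ (f x)) := fun x => rfl
  -- transport of shr through f
  have hshrf : ∀ x y, shr G x y ↔ shr H (f x) (f y) := by
    intro x y
    constructor
    · rintro ⟨z, h1, h2⟩
      exact ⟨f z, f.map_adj_iff.mpr h1, f.map_adj_iff.mpr h2⟩
    · rintro ⟨z, h1, h2⟩
      refine ⟨f.symm z, ?_, ?_⟩
      · have := f.symm.map_adj_iff.mpr h1
        rwa [f.symm_apply_apply] at this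
      · have := f.symm.map_adj_iff.mpr h2
        rwa [f.symm_apply_apply] at this
  have hRf : ∀ x y, RR G x y ↔ RR H (f x) (f y) := by
    intro x y
    constructor
    · intro h
      exact Relation.ReflTransGen.lift f (fun a b hab => (hshrf a b).mp hab) _ _ h
    · intro h
      have h2 : RR G (f.symm (f x)) (f.symm (f y)) := Relation.ReflTransGen.lift (f.symm : Fin 2 × W → Fin 2 × V)
        (fun a b hab => by
          have h3 : shr G (f.symm a) (f.symm b) ↔ shr H (f (f.symm a)) (f (f.symm b)) :=
            hshrf _ _
          rw [f.apply_symm_apply, f.apply_symm_apply] at h3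
          exact h3.mpr hab) _ _ h
      rwa [f.symm_apply_apply, f.symm_apply_apply] at h2
  -- σ and τ compat
  have hσshr : ∀ x y, shr G x y → shr G (σ x) (σ y) := by
    rintro x y ⟨z, h1, h2⟩
    refine ⟨σ z, ⟨?_, h1.2⟩, ⟨?_, h2.2⟩⟩
    · simp only [hσx]
      intro hc
      exact h1.1 (by
        have := congrArg (fun a : Fin 2 => a + 1) hc
        simpa [fin2b] using this)
    · simp only [hσx]
      intro hc
      exact h2.1 (by
        have := congrArg (fun a : Fin 2 => a + 1) hc
        simpa [fin2b] using this)
  have hτshr : ∀ x y, shr H x y → shr H (τ x) (τ y) := by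
    rintro x y ⟨z, h1, h2⟩
    refine ⟨τ z, ⟨?_, h1.2⟩, ⟨?_, h2.2⟩⟩
    · simp only [hτx]
      intro hc
      exact h1.1 (by
        have := congrArg (fun a : Fin 2 => a + 1) hc
        simpa [fin2b] using this)
    · simp only [hτx]
      intro hc
      exact h2.1 (by
        have := congrArg (fun a : Fin 2 => a + 1) hc
        simpa [fin2b] using this)
  have hσR : ∀ x y, RR G x y → RR G (σ x) (σ y) :=
    fun x y h => Relation.ReflTransGen.lift σ (fun a b hab => hσshr a b hab) _ _ h
  have hτR : ∀ x y, RR H x y → RR H (τ x) (τ y) :=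
    fun x y h => Relation.ReflTransGen.lift τ (fun a b hab => hτshr a b hab) _ _ h
  have hπR : ∀ x y, RR G x y → RR G (π x) (π y) := by
    intro x y h
    rw [hπx, hπx, hRf, f.apply_symm_apply, f.apply_symm_apply]
    exact hτR _ _ ((hRf x y).mp h)
  -- fixed point freeness
  have hσfree : ∀ x, ¬ RR G (σ x) x := by
    intro x h
    have h2 := RR_fst h
    rw [hσx] at h2
    exact fin2a x.1 h2
  have hπfree : ∀ x, ¬ RR G (π x) x := by
    intro x h
    have h2 := (hRf _ _).mp h
    rw [hπx, f.apply_symm_apply] at h2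
    have h3 := RR_fst h2
    rw [hτx] at h3
    exact fin2a (f x).1 h3
  -- involutivity
  have hσ2 : ∀ x, σ (σ x) = x := fun x => hinvV x
  have hπ2 : ∀ x, π (π x) = x := by
    intro x
    rw [hπx, hπx, f.apply_symm_apply]
    rw [show τ (τ (f x)) = f x from hinvW (f x)]
    exact f.symm_apply_apply x
  obtain ⟨M, hMs, hMp, hMsat⟩ :=
    exists_alternating_set σ π (RR G) RR_equiv hσ2 hπ2 hσR hπR hσfree hπfree
  -- selection functions
  set aSel : V → Fin 2 := fun v => if (0, v) ∈ M then 0 else 1 with haSeldef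
  have haSel : ∀ v : V, (aSel v, v) ∈ M := by
    intro v
    by_cases h0 : ((0 : Fin 2), v) ∈ M
    · simpa [haSeldef, h0] using h0
    · have h1 : σ ((0 : Fin 2), v) ∈ M := by
        by_contra hc
        exact h0 ((hMs ((0 : Fin 2), v)).mpr hc)
      have e : σ ((0 : Fin 2), v) = ((1 : Fin 2), v) := by
        rw [hσx]
        exact congrArg (fun a : Fin 2 => (a, v)) (by decide : (0 : Fin 2) + 1 = 1)
      rw [e] at h1
      simpa [haSeldef, h0] using h1
  have uniqA : ∀ (v : V) (a b : Fin 2), (a, v) ∈ M → (b, v) ∈ M → a = b := by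
    intro v a b ha hb
    by_contra hab
    have hba : b = a + 1 := fin2d a b hab
    have e : σ (a, v) = (b, v) := by rw [hσx, hba]
    have h2 := (hMs (a, v)).mp ha
    rw [e] at h2
    exact h2 hb
  have haEq : ∀ (v : V) (a : Fin 2), (a, v) ∈ M → aSel v = a :=
    fun v a hx => uniqA v _ a (haSel v) hx
  have hπsymm : ∀ (b : Fin 2) (w : W), π (f.symm (b, w)) = f.symm (b + 1, w) := by
    intro b w
    rw [hπx, f.apply_symm_apply, hτx]
  set bSel : W → Fin 2 := fun w => if f.symm (0, w) ∈ M then 0 else 1 with hbSeldef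
  have hbSel : ∀ w : W, f.symm (bSel w, w) ∈ M := by
    intro w
    by_cases h0 : f.symm ((0 : Fin 2), w) ∈ M
    · simpa [hbSeldef, h0] using h0
    · have h1 : π (f.symm ((0 : Fin 2), w)) ∈ M := by
        by_contra hc
        exact h0 ((hMp _).mpr hc)
      rw [hπsymm] at h1
      have e : (0 : Fin 2) + 1 = 1 := by decide
      rw [e] at h1
      simpa [hbSeldef, h0] using h1
  have uniqB : ∀ (w : W) (a b : Fin 2), f.symm (a, w) ∈ M → f.symm (b, w) ∈ M → a = b := by
    intro w a b ha hb
    by_contra hab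
    have hba : b = a + 1 := fin2d a b hab
    have h2 := (hMp (f.symm (a, w))).mp ha
    rw [hπsymm, ← hba] at h2
    exact h2 hb
  have hbEq : ∀ (w : W) (b : Fin 2), f.symm (b, w) ∈ M → bSel w = b :=
    fun w b hx => uniqB w _ b (hbSel w) hx
  -- non-isolation transfer
  have hni1 : ∀ (x : Fin 2 × V), (∃ u, G.Adj x.2 u) → (∃ u, H.Adj (f x).2 u) := by
    rintro x ⟨u, hu⟩
    have hadj : (kroneckerCover G).Adj (x.1 + 1, u) x := ⟨fin2a x.1, hu.symm⟩
    have h2 := f.map_adj_iff.mpr hadj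
    exact ⟨(f (x.1 + 1, u)).2, h2.2.symm⟩
  have hni2 : ∀ (y : Fin 2 × W), (∃ u, H.Adj y.2 u) → (∃ u, G.Adj (f.symm y).2 u) := by
    rintro y ⟨u, hu⟩
    have hadj : (kroneckerCover H).Adj (y.1 + 1, u) y := ⟨fin2a y.1, hu.symm⟩
    have h2 := f.symm.map_adj_iff.mpr hadj
    exact ⟨(f.symm (y.1 + 1, u)).2, h2.2.symm⟩
  -- the bijection
  set φfun : {v : V // ∃ u, G.Adj v u} → {w : W // ∃ u, H.Adj w u} :=
    fun v => ⟨(f (aSel v.1, v.1)).2, hni1 (aSel v.1, v.1) v.2⟩ with hφdef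
  set ψfun : {w : W // ∃ u, H.Adj w u} → {v : V // ∃ u, G.Adj v u} :=
    fun w => ⟨(f.symm (bSel w.1, w.1)).2, hni2 (bSel w.1, w.1) w.2⟩ with hψdef
  have hli : Function.LeftInverse ψfun φfun := by
    intro v
    apply Subtype.ext
    show (f.symm (bSel (f (aSel v.1, v.1)).2, (f (aSel v.1, v.1)).2)).2 = v.1
    have hb : bSel (f (aSel v.1, v.1)).2 = (f (aSel v.1, v.1)).1 := by
      apply hbEq
      have e : ((f (aSel v.1, v.1)).1, (f (aSel v.1, v.1)).2) = f (aSel v.1, v.1) := rfl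
      rw [e, f.symm_apply_apply]
      exact haSel v.1
    rw [hb]
    have e : ((f (aSel v.1, v.1)).1, (f (aSel v.1, v.1)).2) = f (aSel v.1, v.1) := rfl
    rw [e, f.symm_apply_apply]
  have hri : Function.RightInverse ψfun φfun := by
    intro w
    apply Subtype.ext
    show (f (aSel (f.symm (bSel w.1, w.1)).2, (f.symm (bSel w.1, w.1)).2)).2 = w.1
    have ha : aSel (f.symm (bSel w.1, w.1)).2 = (f.symm (bSel w.1, w.1)).1 := by
      apply haEq
      have e : ((f.symm (bSel w.1, w.1)).1, (f.symm (bSel w.1, w.1)).2)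
          = f.symm (bSel w.1, w.1) := rfl
      rw [e]
      exact hbSel w.1
    rw [ha]
    have e : ((f.symm (bSel w.1, w.1)).1, (f.symm (bSel w.1, w.1)).2)
        = f.symm (bSel w.1, w.1) := rfl
    rw [e, f.apply_symm_apply]
  refine ⟨⟨φfun, ψfun, hli, hri⟩, ?_⟩
  intro S hS
  obtain ⟨v0, hv0⟩ := hS
  constructor
  · rintro ⟨c, hc⟩
    have key : ∀ v ∈ S, ((aSel v0.1 : Fin 2), (v : {v : V // ∃ u, G.Adj v u}).1) ∈ M := by
      intro v hv
      have hR : RR G (aSel v0.1, v0.1) (aSel v0.1, v.1) :=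
        Relation.ReflTransGen.single
          ⟨(aSel v0.1 + 1, c), ⟨fin2a _, hc v0 hv0⟩, ⟨fin2a _, hc v hv⟩⟩
      exact (hMsat _ _ hR).mp (haSel v0.1)
    refine ⟨(f (aSel v0.1 + 1, c)).2, ?_⟩
    intro v hv
    have hav : aSel v.1 = aSel v0.1 := haEq _ _ (key v hv)
    have hadj : (kroneckerCover G).Adj (aSel v0.1 + 1, c) (aSel v.1, v.1) := by
      rw [hav]; exact ⟨fin2a _, hc v hv⟩
    exact (f.map_adj_iff.mpr hadj).2
  · rintro ⟨c, hc⟩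
    have hc' : ∀ v ∈ S, H.Adj c (f (aSel (v : {v : V // ∃ u, G.Adj v u}).1, v.1)).2 :=
      fun v hv => hc v hv
    have hbM : ∀ v ∈ S, (f (aSel (v : {v : V // ∃ u, G.Adj v u}).1, v.1)).1
        = (f (aSel v0.1, v0.1)).1 := by
      intro v hv
      have hRY : RR H (f (aSel v0.1, v0.1))
          ((f (aSel v0.1, v0.1)).1, (f (aSel v.1, v.1)).2) :=
        Relation.ReflTransGen.single
          ⟨((f (aSel v0.1, v0.1)).1 + 1, c), ⟨fin2a _, hc' v0 hv0⟩, ⟨fin2a _, hc' v hv⟩⟩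
      have hRX : RR G (f.symm (f (aSel v0.1, v0.1)))
          (f.symm ((f (aSel v0.1, v0.1)).1, (f (aSel v.1, v.1)).2)) := by
        rw [hRf, f.apply_symm_apply, f.apply_symm_apply]
        exact hRY
      rw [f.symm_apply_apply] at hRX
      have hmem : f.symm ((f (aSel v0.1, v0.1)).1, (f (aSel v.1, v.1)).2) ∈ M :=
        (hMsat _ _ hRX).mp (haSel v0.1)
      have hmem2 : f.symm ((f (aSel v.1, v.1)).1, (f (aSel v.1, v.1)).2) ∈ M := by
        have e : ((f (aSel v.1, v.1)).1, (f (aSel v.1, v.1)).2) = f (aSel v.1, v.1) := rfl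
        rw [e, f.symm_apply_apply]
        exact haSel v.1
      exact uniqB _ _ _ hmem2 hmem
    refine ⟨(f.symm ((f (aSel v0.1, v0.1)).1 + 1, c)).2, ?_⟩
    intro v hv
    have hadjH : (kroneckerCover H).Adj ((f (aSel v0.1, v0.1)).1 + 1, c)
        (f (aSel v.1, v.1)) := by
      constructor
      · show (f (aSel v0.1, v0.1)).1 + 1 ≠ (f (aSel v.1, v.1)).1
        rw [hbM v hv]
        exact fin2a _
      · exact hc' v hv
    have h2 := f.symm.map_adj_iff.mpr hadjH
    rw [f.symm_apply_apply] at h2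
    exact h2.2
end

section
/- Let n, k be integers with n > 2k and k ≥ 1. Then every automorphism of the bipartite Kneser graph H(n,k) = K_2 × K(n,k) is of the form c × f for a unique automorphism c of K_2 and a unique automorphism f of K(n,k); that is, the natural monomorphism Z_2 × Aut(K(n,k)) → Aut(H(n,k)), (c,f) ↦ c × f, is a group isomorphism. In particular, Aut(H(n,k)) is isomorphic to Z_2 × S_n. -/
section
open Finset
namespace ABK



variable {n k : ℕ}

/-- number of k-supersets of a set S with |S| ≤ k -/
lemma card_supersets (S : Finset (Fin n)) (hS : S.card ≤ k) :
    (((univ : Finset (Fin n)).powersetCard k).filter (fun A => S ⊆ A)).card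
      = (n - S.card).choose (k - S.card) := by
  have hc : (n - S.card).choose (k - S.card) = (Sᶜ.powersetCard (k - S.card)).card := by
    rw [Finset.card_powersetCard, Finset.card_compl, Fintype.card_fin]
  rw [hc]
  apply Finset.card_bij' (fun A _ => A \ S) (fun B _ => B ∪ S)
  · intro A hA
    simp only [mem_filter, mem_powersetCard] at hA
    simp only [mem_powersetCard]
    constructor
    · intro x hx
      simp only [mem_sdiff] at hx
      simp [hx.2]
    · rw [card_sdiff_of_subset hA.2, hA.1.2]
  · intro B hB
    simp only [mem_powersetCard] at hB
    simp only [mem_filter, mem_powersetCard]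
    have hdisj : Disjoint B S := by
      intro x hx1 hx2
      intro y hy
      have := hB.1 (hx1 hy)
      simp only [mem_compl] at this
      exact absurd (hx2 hy) this
    refine ⟨⟨subset_univ _, ?_⟩, subset_union_right⟩
    rw [card_union_of_disjoint hdisj, hB.2]
    omega
  · intro A hA
    simp only [mem_filter, mem_powersetCard] at hA
    exact sdiff_union_of_subset hA.2
  · intro B hB
    simp only [mem_powersetCard] at hB
    have hdisj : Disjoint B S := by
      intro x hx1 hx2
      intro y hy
      have := hB.1 (hx1 hy)
      simp only [mem_compl] at this
      exact absurd (hx2 hy) this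
    rw [union_sdiff_distrib, sdiff_self]
    simp [Finset.sdiff_eq_self_iff_disjoint.2 hdisj, hdisj]

lemma card_supersets_zero (S : Finset (Fin n)) (hS : k < S.card) :
    (((univ : Finset (Fin n)).powersetCard k).filter (fun A => S ⊆ A)).card = 0 := by
  rw [Finset.card_eq_zero, Finset.filter_eq_empty_iff]
  rintro A hA hSA
  rw [mem_powersetCard] at hA
  have := card_le_card hSA
  omega


lemma choose_step {n k u : ℕ} (h1 : u < k) (h2 : k < n) :
    (n-(u+1)).choose (k-(u+1)) < (n-u).choose (k-u) := by
  have e1 : n - u = (n-(u+1)) + 1 := by omega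
  have e2 : k - u = (k-(u+1)) + 1 := by omega
  have e3 : (n-u).choose (k-u)
      = (n-(u+1)).choose (k-(u+1)) + (n-(u+1)).choose ((k-(u+1))+1) := by
    rw [e1, e2]; exact Nat.choose_succ_succ _ _
  have : 0 < (n-(u+1)).choose ((k-(u+1))+1) := Nat.choose_pos (by omega)
  omega

lemma choose_anti {n k : ℕ} (h2 : k < n) :
    ∀ v u, u < v → v ≤ k → (n-v).choose (k-v) < (n-u).choose (k-u) := by
  intro v
  induction v with
  | zero => omega
  | succ w ih =>
    intro u hu hv
    rcases Nat.lt_or_ge u w with h | h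
    · exact lt_trans (choose_step (by omega) h2) (ih u h (by omega))
    · have : u = w := by omega
      subst this
      exact choose_step (by omega) h2

lemma choose_inj {n k u v : ℕ} (h2 : k < n) (hu : u ≤ k) (hv : v ≤ k)
    (he : (n-u).choose (k-u) = (n-v).choose (k-v)) : u = v := by
  rcases Nat.lt_trichotomy u v with h | h | h
  · exact absurd he (Nat.ne_of_gt (choose_anti h2 v u h hv))
  · exact h
  · exact absurd he (Nat.ne_of_lt (choose_anti h2 u v h hu))

lemma choose_mono2 {k : ℕ} (hk : 1 ≤ k) : ∀ m m', k ≤ m → m < m' → m.choose k < m'.choose k := by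
  intro m m' hm hmm
  induction m' with
  | zero => omega
  | succ w ih =>
    have step : w.choose k < (w+1).choose k := by
      have e3 : (w+1).choose ((k-1)+1) = w.choose (k-1) + w.choose ((k-1)+1) :=
        Nat.choose_succ_succ _ _
      have e4 : (k-1)+1 = k := by omega
      rw [e4] at e3
      have : 0 < w.choose (k-1) := Nat.choose_pos (by omega)
      omega
    rcases Nat.lt_or_ge m w with h | h
    · exact lt_trans (ih h) step
    · have : m = w := by omega
      subst this; exact step

lemma choose_inj2 {k m m' : ℕ} (hk : 1 ≤ k) (hm : k ≤ m) (hm' : k ≤ m')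
    (he : m.choose k = m'.choose k) : m = m' := by
  rcases Nat.lt_trichotomy m m' with h | h | h
  · exact absurd he (Nat.ne_of_lt (choose_mono2 hk m m' hm h))
  · exact h
  · exact absurd he (Nat.ne_of_gt (choose_mono2 hk m' m hm' h))


lemma sdiff_singleton_of {α : Type*} [DecidableEq α] {T₁ T : Finset α} {d : α} {j : ℕ}
    (hT1 : T₁.card = j) (hint : (T₁ ∩ T).card = j - 1) (hj : 1 ≤ j)
    (hd1 : d ∈ T₁) (hdT : d ∉ T) : T₁ \ T = {d} := by
  have hc : (T₁ ∩ T).card + (T₁ \ T).card = T₁.card := card_inter_add_card_sdiff T₁ T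
  have hcard : (T₁ \ T).card = 1 := by omega
  obtain ⟨x, hx⟩ := Finset.card_eq_one.mp hcard
  have hdm : d ∈ T₁ \ T := Finset.mem_sdiff.mpr ⟨hd1, hdT⟩
  rw [hx] at hdm ⊢
  rw [Finset.mem_singleton] at hdm
  rw [hdm]

lemma clique_lemma {n j : ℕ} (hj : 2 ≤ j) (F : Finset (Finset (Fin n)))
    (hcard : ∀ T ∈ F, T.card = j)
    (hpair : ∀ T ∈ F, ∀ T' ∈ F, T ≠ T' → (T ∩ T').card = j - 1)
    (hbig : j + 1 < F.card) :
    ∃ D : Finset (Fin n), D.card = j - 1 ∧ ∀ T ∈ F, D ⊆ T := by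
  obtain ⟨T₁, h1, T₂, h2, h12⟩ := Finset.one_lt_card.mp (by omega : 1 < F.card)
  set D := T₁ ∩ T₂ with hDdef
  have hD : D.card = j - 1 := hpair T₁ h1 T₂ h2 h12
  have hDT1 : D ⊆ T₁ := inter_subset_left
  have hDT2 : D ⊆ T₂ := inter_subset_right
  have hU : (T₁ ∪ T₂).card = j + 1 := by
    have := Finset.card_union_add_card_inter T₁ T₂
    rw [hcard T₁ h1, hcard T₂ h2, ← hDdef, hD] at this
    omega
  by_contra hcon
  push_neg at hcon
  obtain ⟨T₀, h0, hDT0⟩ := hcon D hD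
  have claimA : ∀ T ∈ F, ¬ D ⊆ T → ∃ d ∈ D, d ∉ T ∧ T = (T₁ ∪ T₂).erase d := by
    intro T hT hDT
    obtain ⟨d, hdD, hdT⟩ := Finset.not_subset.mp hDT
    refine ⟨d, hdD, hdT, ?_⟩
    have hne1 : T ≠ T₁ := fun h => hDT (h ▸ hDT1)
    have hne2 : T ≠ T₂ := fun h => hDT (h ▸ hDT2)
    have sd1 : T₁ \ T = {d} := by
      apply sdiff_singleton_of (hcard T₁ h1) _ (by omega) (hDT1 hdD) hdT
      rw [Finset.inter_comm]
      exact hpair T hT T₁ h1 hne1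
    have sd2 : T₂ \ T = {d} := by
      apply sdiff_singleton_of (hcard T₂ h2) _ (by omega) (hDT2 hdD) hdT
      rw [Finset.inter_comm]
      exact hpair T hT T₂ h2 hne2
    have hsub : (T₁ ∪ T₂).erase d ⊆ T := by
      intro x hx
      obtain ⟨hxd, hxU⟩ := Finset.mem_erase.mp hx
      by_contra hxT
      rcases Finset.mem_union.mp hxU with h | h
      · have : x ∈ T₁ \ T := Finset.mem_sdiff.mpr ⟨h, hxT⟩
        rw [sd1, Finset.mem_singleton] at this; exact hxd this
      · have : x ∈ T₂ \ T := Finset.mem_sdiff.mpr ⟨h, hxT⟩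
        rw [sd2, Finset.mem_singleton] at this; exact hxd this
    have hce : ((T₁ ∪ T₂).erase d).card = j := by
      rw [Finset.card_erase_of_mem (Finset.mem_union.mpr (Or.inl (hDT1 hdD))), hU]
      omega
    exact (Finset.eq_of_subset_of_card_le hsub (by rw [hcard T hT, hce])).symm
  obtain ⟨d₀, hd₀D, hd₀T₀, hT₀eq⟩ := claimA T₀ h0 hDT0
  have claimB : ∀ T ∈ F, T ⊆ T₁ ∪ T₂ := by
    intro T hT
    by_cases hDT : D ⊆ T
    · by_cases hte1 : T = T₁
      · rw [hte1]; exact subset_union_left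
      by_cases hte2 : T = T₂
      · rw [hte2]; exact subset_union_right
      exfalso
      have hi1 : T ∩ T₁ = D := by
        refine (Finset.eq_of_subset_of_card_le (Finset.subset_inter hDT hDT1) ?_).symm
        rw [hD, hpair T hT T₁ h1 hte1]
      have hi2 : T ∩ T₂ = D := by
        refine (Finset.eq_of_subset_of_card_le (Finset.subset_inter hDT hDT2) ?_).symm
        rw [hD, hpair T hT T₂ h2 hte2]
      have hne0 : T ≠ T₀ := fun h => hDT0 (h ▸ hDT)
      have hc0 : (T ∩ T₀).card = j - 1 := hpair T hT T₀ h0 hne0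
      have hsub : T ∩ T₀ ⊆ D.erase d₀ := by
        intro x hx
        obtain ⟨hxT, hxT0⟩ := Finset.mem_inter.mp hx
        rw [hT₀eq] at hxT0
        obtain ⟨hxd, hxU⟩ := Finset.mem_erase.mp hxT0
        refine Finset.mem_erase.mpr ⟨hxd, ?_⟩
        rcases Finset.mem_union.mp hxU with h | h
        · rw [← hi1]; exact Finset.mem_inter.mpr ⟨hxT, h⟩
        · rw [← hi2]; exact Finset.mem_inter.mpr ⟨hxT, h⟩
      have hle := Finset.card_le_card hsub
      rw [Finset.card_erase_of_mem hd₀D, hc0, hD] at hle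
      omega
    · obtain ⟨d, _, _, heq⟩ := claimA T hT hDT
      rw [heq]
      exact Finset.erase_subset _ _
  have hsubF : F ⊆ (T₁ ∪ T₂).powersetCard j := by
    intro T hT
    exact Finset.mem_powersetCard.mpr ⟨claimB T hT, hcard T hT⟩
  have hle := Finset.card_le_card hsubF
  rw [Finset.card_powersetCard, hU, Nat.choose_succ_self_right] at hle
  omega

variable {n k : ℕ}

-- k-supersets of S
def kstar (n k : ℕ) (S : Finset (Fin n)) : Finset (Finset (Fin n)) :=
  ((univ : Finset (Fin n)).powersetCard k).filter (fun A => S ⊆ A)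

lemma mem_kstar {S A : Finset (Fin n)} : A ∈ kstar n k S ↔ A.card = k ∧ S ⊆ A := by
  simp only [kstar, Finset.mem_filter, Finset.mem_powersetCard]
  constructor
  · rintro ⟨⟨-, h2⟩, h3⟩; exact ⟨h2, h3⟩
  · rintro ⟨h1, h2⟩; exact ⟨⟨Finset.subset_univ _, h1⟩, h2⟩

lemma exists_ksuperset {S : Finset (Fin n)} (hS : S.card ≤ k) (hkn : k ≤ n) :
    ∃ A : Finset (Fin n), A.card = k ∧ S ⊆ A := by
  obtain ⟨A, h1, _, h3⟩ := Finset.exists_subsuperset_card_eq (Finset.subset_univ S) hS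
    (by simpa using hkn)
  exact ⟨A, h3, h1⟩

lemma exists_ksuperset_avoid {S : Finset (Fin n)} {x : Fin n} (hS : S.card ≤ k)
    (hx : x ∉ S) (hkn : k ≤ n - 1) :
    ∃ A : Finset (Fin n), A.card = k ∧ S ⊆ A ∧ x ∉ A := by
  have hsub : S ⊆ (univ : Finset (Fin n)).erase x := by
    intro y hy
    exact Finset.mem_erase.mpr ⟨fun h => hx (h ▸ hy), Finset.mem_univ y⟩
  obtain ⟨A, h1, h2, h3⟩ := Finset.exists_subsuperset_card_eq hsub hS
    (by rw [Finset.card_erase_of_mem (Finset.mem_univ x)]; simpa using hkn)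
  exact ⟨A, h3, h1, fun hxA => (Finset.mem_erase.mp (h2 hxA)).1 rfl⟩

lemma subset_of_forall_ksuperset {R₁ R₂ : Finset (Fin n)}
    (hkn : k ≤ n - 1) (hR₁ : R₁.card ≤ k)
    (h : ∀ A : Finset (Fin n), A.card = k → R₁ ⊆ A → R₂ ⊆ A) : R₂ ⊆ R₁ := by
  intro x hx
  by_contra hxR
  obtain ⟨A, hA1, hA2, hA3⟩ := exists_ksuperset_avoid hR₁ hxR hkn
  exact hA3 (h A hA1 hA2 hx)

/-- the key recursive property -/
def Good (n k : ℕ) (F : Finset (Fin n) → Finset (Fin n)) (j : ℕ)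
    (ρ : Finset (Fin n) → Finset (Fin n)) : Prop :=
  (∀ R, R.card = j → (ρ R).card = j) ∧
  (∀ R A, R.card = j → A.card = k → (R ⊆ A ↔ ρ R ⊆ F A))

lemma good_inj {F ρ : Finset (Fin n) → Finset (Fin n)} {j : ℕ}
    (hg : Good n k F j ρ) (hjk : j ≤ k) (hkn : k ≤ n - 1)
    {R₁ R₂ : Finset (Fin n)} (h1 : R₁.card = j) (h2 : R₂.card = j)
    (he : ρ R₁ = ρ R₂) : R₁ = R₂ := by
  have key : ∀ A : Finset (Fin n), A.card = k → R₁ ⊆ A → R₂ ⊆ A := by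
    intro A hA hsub
    rw [hg.2 R₂ A h2 hA, ← he, ← hg.2 R₁ A h1 hA]
    exact hsub
  have h21 : R₂ ⊆ R₁ := subset_of_forall_ksuperset hkn (h1 ▸ hjk) key
  exact (Finset.eq_of_subset_of_card_le h21 (by omega)).symm


lemma count_transfer {F Finv ρ : Finset (Fin n) → Finset (Fin n)} {j : ℕ}
    (hg : Good n k F j ρ)
    (hFc : ∀ A : Finset (Fin n), A.card = k → (F A).card = k)
    (hFinv : ∀ B : Finset (Fin n), B.card = k → (Finv B).card = k ∧ F (Finv B) = B)
    (hFli : ∀ A : Finset (Fin n), A.card = k → Finv (F A) = A)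
    {R₁ R₂ : Finset (Fin n)} (h1 : R₁.card = j) (h2 : R₂.card = j) :
    (kstar n k (R₁ ∪ R₂)).card = (kstar n k (ρ R₁ ∪ ρ R₂)).card := by
  apply Finset.card_bij' (fun A _ => F A) (fun B _ => Finv B)
  · intro A hA
    obtain ⟨hAc, hAs⟩ := mem_kstar.mp hA
    rw [Finset.union_subset_iff] at hAs
    apply mem_kstar.mpr
    refine ⟨hFc A hAc, Finset.union_subset ?_ ?_⟩
    · exact (hg.2 R₁ A h1 hAc).mp hAs.1
    · exact (hg.2 R₂ A h2 hAc).mp hAs.2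
  · intro B hB
    obtain ⟨hBc, hBs⟩ := mem_kstar.mp hB
    rw [Finset.union_subset_iff] at hBs
    obtain ⟨hic, hie⟩ := hFinv B hBc
    apply mem_kstar.mpr
    refine ⟨hic, Finset.union_subset ?_ ?_⟩
    · exact (hg.2 R₁ (Finv B) h1 hic).mpr (by rw [hie]; exact hBs.1)
    · exact (hg.2 R₂ (Finv B) h2 hic).mpr (by rw [hie]; exact hBs.2)
  · intro A hA
    exact hFli A (mem_kstar.mp hA).1
  · intro B hB
    exact (hFinv B (mem_kstar.mp hB).1).2

lemma q_of_good {F Finv ρ : Finset (Fin n) → Finset (Fin n)} {j : ℕ}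
    (hn : 2 * k < n) (hjk : j + 1 ≤ k)
    (hg : Good n k F j ρ)
    (hFc : ∀ A : Finset (Fin n), A.card = k → (F A).card = k)
    (hFinv : ∀ B : Finset (Fin n), B.card = k → (Finv B).card = k ∧ F (Finv B) = B)
    (hFli : ∀ A : Finset (Fin n), A.card = k → Finv (F A) = A)
    {R₁ R₂ : Finset (Fin n)} (h1 : R₁.card = j) (h2 : R₂.card = j)
    (hu : (R₁ ∪ R₂).card = j + 1) :
    (ρ R₁ ∪ ρ R₂).card = j + 1 := by
  have htrans := count_transfer hg hFc hFinv hFli h1 h2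
  have hL : (kstar n k (R₁ ∪ R₂)).card = (n - (j+1)).choose (k - (j+1)) := by
    rw [show kstar n k (R₁ ∪ R₂)
        = ((univ : Finset (Fin n)).powersetCard k).filter (fun A => (R₁ ∪ R₂) ⊆ A) from rfl,
      card_supersets _ (by omega), hu]
  set u' := (ρ R₁ ∪ ρ R₂).card with hu'
  by_cases hbig : k < u'
  · exfalso
    have hR : (kstar n k (ρ R₁ ∪ ρ R₂)).card = 0 := card_supersets_zero _ hbig
    rw [hL, hR] at htrans
    have : 0 < (n - (j+1)).choose (k - (j+1)) := Nat.choose_pos (by omega)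
    omega
  · push_neg at hbig
    have hR : (kstar n k (ρ R₁ ∪ ρ R₂)).card = (n - u').choose (k - u') :=
      card_supersets _ hbig
    rw [hL, hR] at htrans
    exact (choose_inj (by omega) (by omega) hbig htrans).symm

lemma good_step {F ρ : Finset (Fin n) → Finset (Fin n)} {j : ℕ}
    (hn : 2 * k < n) (hj2 : 2 ≤ j) (hjk : j ≤ k)
    (hFc : ∀ A : Finset (Fin n), A.card = k → (F A).card = k)
    (hg : Good n k F j ρ)
    (hq : ∀ R₁ R₂ : Finset (Fin n), R₁.card = j → R₂.card = j →
      (R₁ ∪ R₂).card = j + 1 → (ρ R₁ ∪ ρ R₂).card = j + 1) :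
    ∃ ρ' : Finset (Fin n) → Finset (Fin n), Good n k F (j-1) ρ' := by
  have hkn : k ≤ n - 1 := by omega
  have hins : ∀ (S : Finset (Fin n)) (a : Fin n), S.card = j - 1 → a ∉ S →
      (insert a S).card = j := by
    intro S a hS ha
    rw [Finset.card_insert_of_notMem ha]; omega
  have key : ∀ S : Finset (Fin n), S.card = j - 1 →
      ∃ D : Finset (Fin n), D.card = j - 1 ∧ ∀ a : Fin n, a ∉ S → D ⊆ ρ (insert a S) := by
    intro S hS
    have hinj : Set.InjOn (fun a => ρ (insert a S)) ↑(Sᶜ) := by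
      intro a ha b hb he
      have ha := Finset.mem_compl.mp (Finset.mem_coe.mp ha)
      have hb := Finset.mem_compl.mp (Finset.mem_coe.mp hb)
      have := good_inj hg hjk hkn (hins S a hS ha) (hins S b hS hb) he
      have hab : a ∈ insert b S := this ▸ Finset.mem_insert_self a S
      rcases Finset.mem_insert.mp hab with h | h
      · exact h
      · exact absurd h ha
    set Fam := Sᶜ.image (fun a => ρ (insert a S)) with hFam
    have hFamcard : Fam.card = n - (j - 1) := by
      rw [hFam, Finset.card_image_of_injOn hinj, Finset.card_compl, hS, Fintype.card_fin]
    have hmem : ∀ T ∈ Fam, ∃ a : Fin n, a ∉ S ∧ T = ρ (insert a S) := by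
      intro T hT
      obtain ⟨a, ha, he⟩ := Finset.mem_image.mp hT
      exact ⟨a, Finset.mem_compl.mp ha, he.symm⟩
    obtain ⟨D, hD1, hD2⟩ := clique_lemma hj2 Fam
      (by
        intro T hT
        obtain ⟨a, ha, he⟩ := hmem T hT
        rw [he]; exact hg.1 _ (hins S a hS ha))
      (by
        intro T hT T' hT' hne
        obtain ⟨a, ha, hea⟩ := hmem T hT
        obtain ⟨b, hb, heb⟩ := hmem T' hT'
        have hab : a ≠ b := by
          rintro rfl; exact hne (hea.trans heb.symm)
        have huab : (insert a S ∪ insert b S).card = j + 1 := by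
          rw [Finset.insert_union, Finset.union_insert, Finset.union_self]
          have hna : a ∉ insert b S := by
            intro h
            rcases Finset.mem_insert.mp h with h | h
            · exact hab h
            · exact ha h
          rw [Finset.card_insert_of_notMem hna, Finset.card_insert_of_notMem hb]
          omega
        have := hq (insert a S) (insert b S) (hins S a hS ha) (hins S b hS hb) huab
        have hca := hg.1 _ (hins S a hS ha)
        have hcb := hg.1 _ (hins S b hS hb)
        have hiu := Finset.card_union_add_card_inter (ρ (insert a S)) (ρ (insert b S))
        rw [hea, heb]
        rw [hca, hcb, this] at hiu
        omega)
      (by rw [hFamcard]; omega)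
    exact ⟨D, hD1, fun a ha => by
      have : ρ (insert a S) ∈ Fam :=
        Finset.mem_image.mpr ⟨a, Finset.mem_compl.mpr ha, rfl⟩
      exact hD2 _ this⟩
  classical
  refine ⟨fun S => if h : S.card = j - 1 then (key S h).choose else S, ?_, ?_⟩
  · intro S hS
    simp only [dif_pos hS]
    exact (key S hS).choose_spec.1
  · intro S A hS hA
    simp only [dif_pos hS]
    obtain ⟨hDc, hDs⟩ := (key S hS).choose_spec
    set D := (key S hS).choose with hDdef
    constructor
    · intro hSA
      have : ¬ A ⊆ S := fun h => by have := Finset.card_le_card h; omega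
      obtain ⟨a, haA, haS⟩ := Finset.not_subset.mp this
      have h1 : insert a S ⊆ A := Finset.insert_subset haA hSA
      exact (hDs a haS).trans ((hg.2 (insert a S) A (hins S a hS haS) hA).mp h1)
    · intro hDFA
      -- star equality
      have himsub : Sᶜ.image (fun a => ρ (insert a S)) ⊆ kstar n j D := by
        intro T hT
        obtain ⟨a, ha, he⟩ := Finset.mem_image.mp hT
        rw [← he]
        exact mem_kstar.mpr ⟨hg.1 _ (hins S a hS (Finset.mem_compl.mp ha)),
          hDs a (Finset.mem_compl.mp ha)⟩
      have hinj : Set.InjOn (fun a => ρ (insert a S)) ↑(Sᶜ) := by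
        intro a ha b hb he
        have ha := Finset.mem_compl.mp (Finset.mem_coe.mp ha)
        have hb := Finset.mem_compl.mp (Finset.mem_coe.mp hb)
        have := good_inj hg hjk hkn (hins S a hS ha) (hins S b hS hb) he
        have hab : a ∈ insert b S := this ▸ Finset.mem_insert_self a S
        rcases Finset.mem_insert.mp hab with h | h
        · exact h
        · exact absurd h ha
      have hkstarcard : (kstar n j D).card = n - (j-1) := by
        rw [show kstar n j D
            = ((univ : Finset (Fin n)).powersetCard j).filter (fun A => D ⊆ A) from rfl,
          card_supersets _ (by omega), hDc]
        rw [show j - (j-1) = 1 by omega, Nat.choose_one_right]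
      have him : Sᶜ.image (fun a => ρ (insert a S)) = kstar n j D := by
        apply Finset.eq_of_subset_of_card_le himsub
        rw [hkstarcard, Finset.card_image_of_injOn hinj, Finset.card_compl, hS,
          Fintype.card_fin]
      obtain ⟨R', hR1, hR2, hR3⟩ := Finset.exists_subsuperset_card_eq hDFA
        (by omega : D.card ≤ j) (by rw [hFc A hA]; exact hjk)
      have : R' ∈ kstar n j D := mem_kstar.mpr ⟨hR3, hR1⟩
      rw [← him] at this
      obtain ⟨a, ha, he⟩ := Finset.mem_image.mp this
      have haS := Finset.mem_compl.mp ha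
      have : insert a S ⊆ A := (hg.2 (insert a S) A (hins S a hS haS) hA).mpr (he ▸ hR2)
      exact (Finset.subset_insert a S).trans this


lemma good_base {F : Finset (Fin n) → Finset (Fin n)}
    (hFc : ∀ A : Finset (Fin n), A.card = k → (F A).card = k)
    (hFinje : ∀ A B : Finset (Fin n), A.card = k → B.card = k → F A = F B → A = B) :
    Good n k F k F := by
  refine ⟨fun R hR => hFc R hR, fun R A hR hA => ?_⟩
  constructor
  · intro h
    rw [Finset.eq_of_subset_of_card_le h (by omega)]
  · intro h
    have : F R = F A := Finset.eq_of_subset_of_card_le h (by rw [hFc R hR, hFc A hA])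
    rw [hFinje R A hR hA this]

lemma filter_disj_eq (A₁ A₂ : Finset (Fin n)) :
    ((univ : Finset (Fin n)).powersetCard k).filter
        (fun C => Disjoint C A₁ ∧ Disjoint C A₂)
      = (A₁ ∪ A₂)ᶜ.powersetCard k := by
  ext C
  simp only [Finset.mem_filter, Finset.mem_powersetCard, Finset.subset_univ, true_and]
  constructor
  · rintro ⟨h1, h2, h3⟩
    refine ⟨fun x hx => Finset.mem_compl.mpr ?_, h1⟩
    intro hm
    rcases Finset.mem_union.mp hm with h | h
    · exact (Finset.disjoint_left.mp h2) hx h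
    · exact (Finset.disjoint_left.mp h3) hx h
  · rintro ⟨h1, h2⟩
    refine ⟨h2, ?_, ?_⟩ <;> [skip; skip] <;>
      (rw [Finset.disjoint_left]; intro x hx hm;
       exact (Finset.mem_compl.mp (h1 hx)) (Finset.mem_union.mpr (by first | exact Or.inl hm | exact Or.inr hm)))

lemma qtop {F G Ginv : Finset (Fin n) → Finset (Fin n)}
    (hn : 2 * k < n) (hk : 1 ≤ k)
    (hFc : ∀ A : Finset (Fin n), A.card = k → (F A).card = k)
    (hFinje : ∀ A B : Finset (Fin n), A.card = k → B.card = k → F A = F B → A = B)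
    (hGc : ∀ A : Finset (Fin n), A.card = k → (G A).card = k)
    (hGinv : ∀ B : Finset (Fin n), B.card = k → (Ginv B).card = k ∧ G (Ginv B) = B)
    (hGli : ∀ A : Finset (Fin n), A.card = k → Ginv (G A) = A)
    (hH : ∀ A B : Finset (Fin n), A.card = k → B.card = k →
      (Disjoint A B ↔ Disjoint (F A) (G B)))
    {A₁ A₂ : Finset (Fin n)} (h1 : A₁.card = k) (h2 : A₂.card = k)
    (hu : (A₁ ∪ A₂).card = k + 1) :
    (F A₁ ∪ F A₂).card = k + 1 := by
  have hcnt : (((univ : Finset (Fin n)).powersetCard k).filter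
        (fun C => Disjoint C A₁ ∧ Disjoint C A₂)).card
      = (((univ : Finset (Fin n)).powersetCard k).filter
        (fun C => Disjoint C (F A₁) ∧ Disjoint C (F A₂))).card := by
    apply Finset.card_bij' (fun C _ => G C) (fun C _ => Ginv C)
    · intro C hC
      simp only [Finset.mem_filter, Finset.mem_powersetCard, Finset.subset_univ,
        true_and] at hC ⊢
      obtain ⟨hc, d1, d2⟩ := hC
      refine ⟨hGc C hc, ?_, ?_⟩
      · exact disjoint_comm.mp ((hH A₁ C h1 hc).mp (disjoint_comm.mp d1))
      · exact disjoint_comm.mp ((hH A₂ C h2 hc).mp (disjoint_comm.mp d2))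
    · intro C hC
      simp only [Finset.mem_filter, Finset.mem_powersetCard, Finset.subset_univ,
        true_and] at hC ⊢
      obtain ⟨hc, d1, d2⟩ := hC
      obtain ⟨hic, hie⟩ := hGinv C hc
      refine ⟨hic, ?_, ?_⟩
      · exact disjoint_comm.mp ((hH A₁ (Ginv C) h1 hic).mpr
          (by rw [hie]; exact disjoint_comm.mp d1))
      · exact disjoint_comm.mp ((hH A₂ (Ginv C) h2 hic).mpr
          (by rw [hie]; exact disjoint_comm.mp d2))
    · intro C hC
      simp only [Finset.mem_filter, Finset.mem_powersetCard, Finset.subset_univ,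
        true_and] at hC
      exact hGli C hC.1
    · intro C hC
      simp only [Finset.mem_filter, Finset.mem_powersetCard, Finset.subset_univ,
        true_and] at hC
      exact (hGinv C hC.1).2
  rw [filter_disj_eq, filter_disj_eq] at hcnt
  rw [Finset.card_powersetCard, Finset.card_powersetCard, Finset.card_compl,
    Finset.card_compl, Fintype.card_fin, hu] at hcnt
  set u' := (F A₁ ∪ F A₂).card with hu'
  have hne : A₁ ≠ A₂ := by
    rintro rfl
    rw [Finset.union_self, h1] at hu
    omega
  have hFne : F A₁ ≠ F A₂ := fun h => hne (hFinje A₁ A₂ h1 h2 h)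
  have hub : u' ≤ 2 * k := by
    have := Finset.card_union_le (F A₁) (F A₂)
    rw [hFc A₁ h1, hFc A₂ h2] at this
    omega
  have hlb : k + 1 ≤ u' := by
    by_contra hcon
    push_neg at hcon
    have hsub : F A₁ ⊆ F A₁ ∪ F A₂ := Finset.subset_union_left
    have h1' : F A₁ = F A₁ ∪ F A₂ :=
      Finset.eq_of_subset_of_card_le hsub (by rw [hFc A₁ h1]; omega)
    have hsub2 : F A₂ ⊆ F A₁ ∪ F A₂ := Finset.subset_union_right
    have h2' : F A₂ = F A₁ ∪ F A₂ :=
      Finset.eq_of_subset_of_card_le hsub2 (by rw [hFc A₂ h2]; omega)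
    exact hFne (h1'.trans h2'.symm)
  have hpos : 0 < (n - (k+1)).choose k := Nat.choose_pos (by omega)
  have hge : k ≤ n - u' := by
    by_contra hcon
    push_neg at hcon
    rw [Nat.choose_eq_zero_of_lt hcon] at hcnt
    omega
  have := choose_inj2 hk (by omega) hge hcnt
  omega

lemma disj_det (hn : 2 * k < n) (hk : 1 ≤ k) {X Y : Finset (Fin n)}
    (hX : X.card = k) (hY : Y.card = k)
    (h : ∀ C : Finset (Fin n), C.card = k → (Disjoint C X ↔ Disjoint C Y)) : X = Y := by
  have hsub : X ⊆ Y := by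
    intro x hx
    by_contra hxY
    have hxc : ({x} : Finset (Fin n)) ⊆ Yᶜ := by
      simp [Finset.mem_compl, hxY]
    obtain ⟨C, hC1, hC2, hC3⟩ := Finset.exists_subsuperset_card_eq hxc
      (by simpa using hk) (by rw [Finset.card_compl, hY, Fintype.card_fin]; omega)
    have hCY : Disjoint C Y := by
      rw [Finset.disjoint_left]
      intro a ha hm
      exact (Finset.mem_compl.mp (hC2 ha)) hm
    have hCX : Disjoint C X := (h C hC3).mpr hCY
    exact (Finset.disjoint_left.mp hCX) (hC1 (Finset.mem_singleton_self x)) hx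
  exact Finset.eq_of_subset_of_card_le hsub (by omega)

lemma main_sigma {F Finv : Finset (Fin n) → Finset (Fin n)}
    (hn : 2 * k < n) (hk : 1 ≤ k)
    (hFc : ∀ A : Finset (Fin n), A.card = k → (F A).card = k)
    (hFinv : ∀ B : Finset (Fin n), B.card = k → (Finv B).card = k ∧ F (Finv B) = B)
    (hFli : ∀ A : Finset (Fin n), A.card = k → Finv (F A) = A)
    (hqt : ∀ A₁ A₂ : Finset (Fin n), A₁.card = k → A₂.card = k →
      (A₁ ∪ A₂).card = k + 1 → (F A₁ ∪ F A₂).card = k + 1) :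
    ∃ σ : Fin n → Fin n, Function.Injective σ ∧
      ∀ A : Finset (Fin n), A.card = k → F A = A.image σ := by
  have hFinje : ∀ A B : Finset (Fin n), A.card = k → B.card = k → F A = F B → A = B := by
    intro A B hA hB h
    rw [← hFli A hA, ← hFli B hB, h]
  have desc : ∀ d : ℕ, d ≤ k - 1 → ∃ ρ, Good n k F (k - d) ρ := by
    intro d
    induction d with
    | zero =>
      intro _
      exact ⟨F, by rw [Nat.sub_zero]; exact good_base hFc hFinje⟩
    | succ e ih =>
      intro hd
      obtain ⟨ρ, hρ⟩ := ih (by omega)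
      set j := k - e with hj
      have hj2 : 2 ≤ j := by omega
      have hjk : j ≤ k := by omega
      have hq : ∀ R₁ R₂ : Finset (Fin n), R₁.card = j → R₂.card = j →
          (R₁ ∪ R₂).card = j + 1 → (ρ R₁ ∪ ρ R₂).card = j + 1 := by
        rcases Nat.lt_or_ge j k with hlt | hge
        · exact fun R₁ R₂ a b c => q_of_good hn (by omega) hρ hFc hFinv hFli a b c
        · have hjek : j = k := by omega
          have hρF : ∀ A : Finset (Fin n), A.card = k → ρ A = F A := by
            intro A hA
            have hsub : ρ A ⊆ F A :=
              (hρ.2 A A (by rw [hjek] at *; exact hA) hA).mp (Finset.Subset.refl A)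
            exact Finset.eq_of_subset_of_card_le hsub
              (by rw [hFc A hA, hρ.1 A (by rw [hjek]; exact hA), hjek])
          intro R₁ R₂ a b c
          rw [hjek] at a b c ⊢
          rw [hρF R₁ a, hρF R₂ b]
          exact hqt R₁ R₂ a b c
      obtain ⟨ρ', hρ'⟩ := good_step hn hj2 hjk hFc hρ hq
      exact ⟨ρ', by rw [show k - (e+1) = j - 1 by omega]; exact hρ'⟩
  obtain ⟨ρ₁, hρ₁⟩ := desc (k-1) (le_refl _)
  rw [show k - (k-1) = 1 by omega] at hρ₁
  have hsing : ∀ x : Fin n, ∃ y, ρ₁ {x} = {y} := by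
    intro x
    exact Finset.card_eq_one.mp (hρ₁.1 {x} (Finset.card_singleton x))
  choose σ hσ using hsing
  have hmemiff : ∀ (x : Fin n) (A : Finset (Fin n)), A.card = k → (x ∈ A ↔ σ x ∈ F A) := by
    intro x A hA
    have := hρ₁.2 {x} A (Finset.card_singleton x) hA
    rw [hσ x] at this
    simpa [Finset.singleton_subset_iff] using this
  have hinj : Function.Injective σ := by
    intro x y hxy
    by_contra hne
    obtain ⟨A, hA1, hA2, hA3⟩ := exists_ksuperset_avoid (k := k) (S := {x})
      (by rw [Finset.card_singleton]; exact hk)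
      (fun h => hne (Finset.mem_singleton.mp h).symm) (by omega)
    rw [Finset.singleton_subset_iff] at hA2
    have h1 : σ x ∈ F A := (hmemiff x A hA1).mp hA2
    rw [hxy] at h1
    exact hA3 ((hmemiff y A hA1).mpr h1)
  refine ⟨σ, hinj, fun A hA => ?_⟩
  have hsub : A.image σ ⊆ F A := by
    intro y hy
    obtain ⟨a, ha, rfl⟩ := Finset.mem_image.mp hy
    exact (hmemiff a A hA).mp ha
  exact (Finset.eq_of_subset_of_card_le hsub
    (by rw [Finset.card_image_of_injective _ hinj, hFc A hA, hA])).symm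

lemma kneser_adj {A B : {s : Finset (Fin n) // s.card = k}} (hk : 1 ≤ k) :
    (kneserGraph n k).Adj A B ↔ Disjoint A.1 B.1 := by
  constructor
  · exact fun h => h.2
  · intro h
    refine ⟨fun he => ?_, h⟩
    subst he
    rw [disjoint_self, Finset.bot_eq_empty] at h
    have h2 := A.2
    rw [h, Finset.card_empty] at h2
    omega

lemma perm_W (hn : 2 * k < n) (hk : 1 ≤ k)
    (f g : Equiv.Perm {s : Finset (Fin n) // s.card = k})
    (hH : ∀ A B : {s : Finset (Fin n) // s.card = k},
      Disjoint A.1 B.1 ↔ Disjoint (f A).1 (g B).1) :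
    ∃ σ : Equiv.Perm (Fin n),
      (∀ A : {s : Finset (Fin n) // s.card = k}, (f A).1 = A.1.image σ) ∧ g = f := by
  classical
  let F : Finset (Fin n) → Finset (Fin n) :=
    fun A => if h : A.card = k then (f ⟨A, h⟩).1 else A
  let Finv : Finset (Fin n) → Finset (Fin n) :=
    fun A => if h : A.card = k then (f.symm ⟨A, h⟩).1 else A
  let G : Finset (Fin n) → Finset (Fin n) :=
    fun A => if h : A.card = k then (g ⟨A, h⟩).1 else A
  let Ginv : Finset (Fin n) → Finset (Fin n) :=
    fun A => if h : A.card = k then (g.symm ⟨A, h⟩).1 else A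
  have hFc : ∀ A : Finset (Fin n), A.card = k → (F A).card = k := by
    intro A hA; simp only [F, dif_pos hA]; exact (f ⟨A, hA⟩).2
  have hGc : ∀ A : Finset (Fin n), A.card = k → (G A).card = k := by
    intro A hA; simp only [G, dif_pos hA]; exact (g ⟨A, hA⟩).2
  have hFinv : ∀ B : Finset (Fin n), B.card = k → (Finv B).card = k ∧ F (Finv B) = B := by
    intro B hB
    simp only [F, Finv, dif_pos hB]
    refine ⟨(f.symm ⟨B, hB⟩).2, ?_⟩
    rw [dif_pos (f.symm ⟨B, hB⟩).2]
    simp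
  have hGinv : ∀ B : Finset (Fin n), B.card = k → (Ginv B).card = k ∧ G (Ginv B) = B := by
    intro B hB
    simp only [G, Ginv, dif_pos hB]
    refine ⟨(g.symm ⟨B, hB⟩).2, ?_⟩
    rw [dif_pos (g.symm ⟨B, hB⟩).2]
    simp
  have hFli : ∀ A : Finset (Fin n), A.card = k → Finv (F A) = A := by
    intro A hA
    simp only [F, Finv, dif_pos hA]
    rw [dif_pos (f ⟨A, hA⟩).2]
    simp
  have hGli : ∀ A : Finset (Fin n), A.card = k → Ginv (G A) = A := by
    intro A hA
    simp only [G, Ginv, dif_pos hA]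
    rw [dif_pos (g ⟨A, hA⟩).2]
    simp
  have hFinje : ∀ A B : Finset (Fin n), A.card = k → B.card = k → F A = F B → A = B := by
    intro A B hA hB h
    rw [← hFli A hA, ← hFli B hB, h]
  have hH' : ∀ A B : Finset (Fin n), A.card = k → B.card = k →
      (Disjoint A B ↔ Disjoint (F A) (G B)) := by
    intro A B hA hB
    simp only [F, G, dif_pos hA, dif_pos hB]
    exact hH ⟨A, hA⟩ ⟨B, hB⟩
  have hqt : ∀ A₁ A₂ : Finset (Fin n), A₁.card = k → A₂.card = k →
      (A₁ ∪ A₂).card = k + 1 → (F A₁ ∪ F A₂).card = k + 1 := fun A₁ A₂ h1 h2 h3 =>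
    qtop hn hk hFc hFinje hGc hGinv hGli hH' h1 h2 h3
  obtain ⟨σ0, hinj, himg⟩ := main_sigma hn hk hFc hFinv hFli hqt
  let σ : Equiv.Perm (Fin n) := Equiv.ofBijective σ0 (Finite.injective_iff_bijective.mp hinj)
  have hσ0 : ∀ x, σ x = σ0 x := fun x => rfl
  have hfim : ∀ A : {s : Finset (Fin n) // s.card = k}, (f A).1 = A.1.image σ := by
    intro A
    have h1 : F A.1 = (f A).1 := by
      simp only [F, dif_pos A.2]
    have := himg A.1 A.2
    rw [h1] at this
    rw [this]
    apply Finset.image_congr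
    intro x _
    rfl
  refine ⟨σ, hfim, ?_⟩
  have hff : ∀ A B : {s : Finset (Fin n) // s.card = k}, Disjoint A.1 B.1 ↔ Disjoint (f A).1 (f B).1 := by
    intro A B
    rw [hfim A, hfim B]
    constructor
    · intro h
      rw [Finset.disjoint_left]
      intro x hx hy
      obtain ⟨a, ha, rfl⟩ := Finset.mem_image.mp hx
      obtain ⟨b, hb, hsb⟩ := Finset.mem_image.mp hy
      have hab : b = a := σ.injective hsb
      exact (Finset.disjoint_left.mp h) ha (hab ▸ hb)
    · intro h
      rw [Finset.disjoint_left]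
      intro x hx hy
      exact (Finset.disjoint_left.mp h) (Finset.mem_image_of_mem σ hx)
        (Finset.mem_image_of_mem σ hy)
  have hgf : ∀ B : {s : Finset (Fin n) // s.card = k}, g B = f B := by
    intro B
    have key : ∀ C : {s : Finset (Fin n) // s.card = k}, Disjoint C.1 (g B).1 ↔ Disjoint C.1 (f B).1 := by
      intro C
      obtain ⟨A, rfl⟩ := f.surjective C
      rw [← hH A B, hff A B]
    exact Subtype.ext (disj_det hn hk (g B).2 (f B).2 (fun C hC => key ⟨C, hC⟩))
  exact Equiv.ext hgf

lemma fin2_pigeon : ∀ x y z : Fin 2, x ≠ z → y ≠ z → x = y := by decide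
lemma fin2_succ_ne : ∀ a : Fin 2, a ≠ a + 1 := by decide
lemma fin2_eq_add : ∀ x y : Fin 2, x ≠ y → 1 + x = y := by decide

lemma decompose (hn : 2 * k < n) (hk : 1 ≤ k)
    (π : Equiv.Perm (Fin 2 × {s : Finset (Fin n) // s.card = k}))
    (hπ : π ∈ graphAut (kroneckerCover (kneserGraph n k))) :
    ∃ (c : Equiv.Perm (Fin 2)) (f : Equiv.Perm {s : Finset (Fin n) // s.card = k}),
      f ∈ graphAut (kneserGraph n k) ∧ π = Equiv.prodCongr c f := by
  classical
  have hπ' : ∀ x y, (kroneckerCover (kneserGraph n k)).Adj (π x) (π y) ↔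
      (kroneckerCover (kneserGraph n k)).Adj x y := hπ
  set q : Fin 2 × {s : Finset (Fin n) // s.card = k} → Fin 2 := fun x => (π x).1 with hq
  have hedge : ∀ x y, (kroneckerCover (kneserGraph n k)).Adj x y → q x ≠ q y := by
    intro x y hxy
    exact ((hπ' x y).mpr hxy).1
  have two_step : ∀ (a : Fin 2) (A B C : {s : Finset (Fin n) // s.card = k}),
      Disjoint A.1 C.1 → Disjoint C.1 B.1 → q (a, A) = q (a, B) := by
    intro a A B C h1 h2
    have e1 : (kroneckerCover (kneserGraph n k)).Adj (a, A) (a+1, C) :=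
      ⟨fin2_succ_ne a, (kneser_adj hk).mpr h1⟩
    have e2 : (kroneckerCover (kneserGraph n k)).Adj (a, B) (a+1, C) :=
      ⟨fin2_succ_ne a, (kneser_adj hk).mpr h2.symm⟩
    exact fin2_pigeon _ _ _ (hedge _ _ e1) (hedge _ _ e2)
  have even : ∀ (a : Fin 2) (A B : {s : Finset (Fin n) // s.card = k}),
      q (a, A) = q (a, B) := by
    have H : ∀ (m : ℕ) (a : Fin 2) (A B : {s : Finset (Fin n) // s.card = k}),
        (A.1 \ B.1).card = m → q (a, A) = q (a, B) := by
      intro m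
      induction m using Nat.strong_induction_on with
      | _ m ih =>
        intro a A B hm
        rcases Nat.eq_zero_or_pos m with h0 | hpos
        · have : A.1 \ B.1 = ∅ := Finset.card_eq_zero.mp (h0 ▸ hm)
          have hsub : A.1 ⊆ B.1 := by
            intro x hx
            by_contra hxB
            exact absurd (Finset.mem_sdiff.mpr ⟨hx, hxB⟩) (by rw [this]; simp)
          have : A = B := Subtype.ext (Finset.eq_of_subset_of_card_le hsub
            (by rw [A.2, B.2]))
          rw [this]
        · obtain ⟨x, hx⟩ := Finset.card_pos.mp (hm ▸ hpos)
          obtain ⟨hxA, hxB⟩ := Finset.mem_sdiff.mp hx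
          have hBA : (B.1 \ A.1).Nonempty := by
            rw [← Finset.card_pos, Finset.card_sdiff_comm (by rw [A.2, B.2])]
            omega
          obtain ⟨y, hy⟩ := hBA
          obtain ⟨hyB, hyA⟩ := Finset.mem_sdiff.mp hy
          set A' : Finset (Fin n) := insert y (A.1.erase x) with hA'
          have hyer : y ∉ A.1.erase x := fun h => hyA (Finset.mem_of_mem_erase h)
          have hA'c : A'.card = k := by
            rw [hA', Finset.card_insert_of_notMem hyer,
              Finset.card_erase_of_mem hxA, A.2]
            omega
          -- common disjoint C
          have hcub : (A.1 ∪ A').card ≤ k + 1 := by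
            have h1 : A.1 ∪ A' ⊆ insert y A.1 := by
              intro z hz
              rcases Finset.mem_union.mp hz with h | h
              · exact Finset.mem_insert_of_mem h
              · rcases Finset.mem_insert.mp h with h | h
                · exact h ▸ Finset.mem_insert_self y A.1
                · exact Finset.mem_insert_of_mem (Finset.mem_of_mem_erase h)
            calc (A.1 ∪ A').card ≤ (insert y A.1).card := Finset.card_le_card h1
              _ ≤ A.1.card + 1 := Finset.card_insert_le y A.1
              _ = k + 1 := by rw [A.2]
          obtain ⟨C, hC1, hC2⟩ := Finset.exists_subset_card_eq
            (show k ≤ (A.1 ∪ A')ᶜ.card by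
              rw [Finset.card_compl, Fintype.card_fin]; omega)
          have hdisj : ∀ X : Finset (Fin n), X ⊆ A.1 ∪ A' → Disjoint X C := by
            intro X hX
            rw [Finset.disjoint_left]
            intro z hz hzC
            exact (Finset.mem_compl.mp (hC1 hzC)) (hX hz)
          have step1 : q (a, A) = q (a, ⟨A', hA'c⟩) :=
            two_step a A ⟨A', hA'c⟩ ⟨C, hC2⟩
              (hdisj A.1 Finset.subset_union_left)
              ((hdisj A' Finset.subset_union_right).symm)
          have hlt : (A' \ B.1).card < m := by
            have hsub : A' \ B.1 ⊆ (A.1 \ B.1).erase x := by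
              intro z hz
              obtain ⟨hzA', hzB⟩ := Finset.mem_sdiff.mp hz
              rcases Finset.mem_insert.mp hzA' with h | h
              · exact absurd (h ▸ hyB) hzB
              · exact Finset.mem_erase.mpr ⟨(Finset.mem_erase.mp h).1,
                  Finset.mem_sdiff.mpr ⟨Finset.mem_of_mem_erase h, hzB⟩⟩
            calc (A' \ B.1).card ≤ ((A.1 \ B.1).erase x).card := Finset.card_le_card hsub
              _ = m - 1 := by rw [Finset.card_erase_of_mem hx, hm]
              _ < m := by omega
          have step2 : q (a, ⟨A', hA'c⟩) = q (a, B) :=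
            ih _ hlt a ⟨A', hA'c⟩ B rfl
          exact step1.trans step2
    intro a A B
    exact H _ a A B rfl
  -- base vertices
  obtain ⟨A₀, hA₀⟩ := Finset.exists_subset_card_eq
    (show k ≤ (univ : Finset (Fin n)).card by rw [Finset.card_univ, Fintype.card_fin]; omega)
  obtain ⟨hA₀u, hA₀c⟩ := hA₀
  obtain ⟨B₀, hB₀1, hB₀2⟩ := Finset.exists_subset_card_eq
    (show k ≤ A₀ᶜ.card by rw [Finset.card_compl, Fintype.card_fin]; omega)
  have hdisj₀ : Disjoint A₀ B₀ := by
    rw [Finset.disjoint_left]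
    intro z hz hzB
    exact (Finset.mem_compl.mp (hB₀1 hzB)) hz
  set vA : {s : Finset (Fin n) // s.card = k} := ⟨A₀, hA₀c⟩
  set vB : {s : Finset (Fin n) // s.card = k} := ⟨B₀, hB₀2⟩
  set c₀ := q (0, vA) with hc₀
  set c₁ := q (1, vB) with hc₁
  have hc01 : c₀ ≠ c₁ := by
    apply hedge
    exact ⟨(by decide : (0 : Fin 2) ≠ 1), (kneser_adj hk).mpr hdisj₀⟩
  have hq0 : ∀ A, q (0, A) = c₀ := fun A => even 0 A vA
  have hq1 : ∀ A, q (1, A) = c₁ := fun A => even 1 A vB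
  set f0 : {s : Finset (Fin n) // s.card = k} → {s : Finset (Fin n) // s.card = k} :=
    fun A => (π (0, A)).2 with hf0
  set g0 : {s : Finset (Fin n) // s.card = k} → {s : Finset (Fin n) // s.card = k} :=
    fun A => (π (1, A)).2 with hg0
  have hπ0 : ∀ A, π (0, A) = (c₀, f0 A) := by
    intro A
    exact Prod.ext (hq0 A) rfl
  have hπ1 : ∀ A, π (1, A) = (c₁, g0 A) := by
    intro A
    exact Prod.ext (hq1 A) rfl
  have hf0inj : Function.Injective f0 := by
    intro A B h
    have : π (0, A) = π (0, B) := by rw [hπ0 A, hπ0 B, h]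
    have := π.injective this
    exact (Prod.ext_iff.mp this).2
  have hg0inj : Function.Injective g0 := by
    intro A B h
    have : π (1, A) = π (1, B) := by rw [hπ1 A, hπ1 B, h]
    have := π.injective this
    exact (Prod.ext_iff.mp this).2
  set f : Equiv.Perm {s : Finset (Fin n) // s.card = k} :=
    Equiv.ofBijective f0 (Finite.injective_iff_bijective.mp hf0inj) with hfdef
  set g : Equiv.Perm {s : Finset (Fin n) // s.card = k} :=
    Equiv.ofBijective g0 (Finite.injective_iff_bijective.mp hg0inj) with hgdef
  have hH : ∀ A B : {s : Finset (Fin n) // s.card = k},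
      Disjoint A.1 B.1 ↔ Disjoint (f A).1 (g B).1 := by
    intro A B
    have h1 := hπ' (0, A) (1, B)
    rw [hπ0 A, hπ1 B] at h1
    have hrhs : (kroneckerCover (kneserGraph n k)).Adj (0, A) (1, B) ↔ Disjoint A.1 B.1 := by
      constructor
      · intro h; exact ((kneser_adj hk).mp h.2)
      · intro h; exact ⟨(by decide : (0 : Fin 2) ≠ 1), (kneser_adj hk).mpr h⟩
    have hlhs : (kroneckerCover (kneserGraph n k)).Adj (c₀, f0 A) (c₁, g0 B) ↔
        Disjoint (f0 A).1 (g0 B).1 := by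
      constructor
      · intro h; exact ((kneser_adj hk).mp h.2)
      · intro h; exact ⟨hc01, (kneser_adj hk).mpr h⟩
    rw [hrhs, hlhs] at h1
    exact h1.symm
  obtain ⟨σ, himg, hgf⟩ := perm_W hn hk f g hH
  refine ⟨Equiv.addRight c₀, f, ?_, ?_⟩
  · intro A B
    have hdd : Disjoint A.1 B.1 ↔ Disjoint (f A).1 (f B).1 := by
      rw [hH A B, hgf]
    rw [kneser_adj hk, kneser_adj hk]
    exact hdd.symm
  · apply Equiv.ext
    rintro ⟨a, A⟩
    have hca : ∀ b : Fin 2, (Equiv.addRight c₀) b = b + c₀ := fun b => rfl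
    fin_cases a
    · show π (0, A) = ((Equiv.addRight c₀) 0, f A)
      rw [hπ0 A, hca 0, zero_add]
      rfl
    · show π (1, A) = ((Equiv.addRight c₀) 1, f A)
      rw [hπ1 A, hca 1]
      have h1 : (1 : Fin 2) + c₀ = c₁ := fin2_eq_add c₀ c₁ hc01
      rw [h1, ← hgf]
      rfl

def e1 : Equiv.Perm (Fin 2) ≃* Multiplicative (ZMod 2) where
  toFun := fun π => Multiplicative.ofAdd (if π 0 = 0 then (0 : ZMod 2) else 1)
  invFun := fun m => if m = Multiplicative.ofAdd (0 : ZMod 2) then 1 else Equiv.swap 0 1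
  left_inv := by decide
  right_inv := by decide
  map_mul' := by decide

def permV (n k : ℕ) (σ : Equiv.Perm (Fin n)) :
    Equiv.Perm {s : Finset (Fin n) // s.card = k} where
  toFun := fun A => ⟨A.1.image σ,
    by rw [Finset.card_image_of_injective _ σ.injective, A.2]⟩
  invFun := fun A => ⟨A.1.image σ.symm,
    by rw [Finset.card_image_of_injective _ σ.symm.injective, A.2]⟩
  left_inv := by
    intro A
    apply Subtype.ext
    simp [Finset.image_image]
  right_inv := by
    intro A
    apply Subtype.ext
    simp [Finset.image_image]

lemma permV_val (n k : ℕ) (σ : Equiv.Perm (Fin n))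
    (A : {s : Finset (Fin n) // s.card = k}) : (permV n k σ A).1 = A.1.image σ := rfl

def Phi (n k : ℕ) : Equiv.Perm (Fin n) →* Equiv.Perm {s : Finset (Fin n) // s.card = k} :=
  MonoidHom.mk' (fun σ => permV n k σ) (by
    intro σ τ
    apply Equiv.ext
    intro A
    apply Subtype.ext
    simp [permV, Finset.image_image, Function.comp_def])

lemma Phi_mem (n k : ℕ) (hk : 1 ≤ k) (σ : Equiv.Perm (Fin n)) :
    Phi n k σ ∈ graphAut (kneserGraph n k) := by
  intro A B
  rw [kneser_adj hk, kneser_adj hk]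
  show Disjoint ((permV n k σ) A).1 ((permV n k σ) B).1 ↔ _
  rw [permV_val, permV_val]
  exact Finset.disjoint_image σ.injective

lemma Phi_inj (hn : 2 * k < n) (hk : 1 ≤ k) :
    Function.Injective (Phi n k) := by
  classical
  apply (injective_iff_map_eq_one (Phi n k)).mpr
  intro σ hσ
  have him : ∀ A : Finset (Fin n), A.card = k → A.image σ = A := by
    intro A hA
    have : Phi n k σ ⟨A, hA⟩ = ⟨A, hA⟩ := by rw [hσ]; rfl
    exact congrArg Subtype.val this
  apply Equiv.ext
  intro x
  simp only [Equiv.Perm.coe_one, id_eq]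
  -- build A containing x, and B with A ∩ B = {x}
  obtain ⟨A, hxA, _, hAc⟩ := Finset.exists_subsuperset_card_eq (n := k)
    (Finset.subset_univ {x}) (by rw [Finset.card_singleton]; omega)
    (by rw [Finset.card_univ, Fintype.card_fin]; omega)
  rw [Finset.singleton_subset_iff] at hxA
  obtain ⟨C, hC1, hC2⟩ := Finset.exists_subset_card_eq
    (show k - 1 ≤ Aᶜ.card by rw [Finset.card_compl, Fintype.card_fin, hAc]; omega)
  have hxC : x ∉ C := fun h => (Finset.mem_compl.mp (hC1 h)) hxA
  set B : Finset (Fin n) := insert x C with hB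
  have hBc : B.card = k := by
    rw [hB, Finset.card_insert_of_notMem hxC, hC2]; omega
  have hσA : σ x ∈ A := by
    rw [← him A hAc]
    exact Finset.mem_image_of_mem σ hxA
  have hσB : σ x ∈ B := by
    rw [← him B hBc]
    exact Finset.mem_image_of_mem σ (Finset.mem_insert_self x C)
  rcases Finset.mem_insert.mp hσB with h | h
  · exact h
  · exact absurd hσA (Finset.mem_compl.mp (hC1 h))

lemma Phi_surj (hn : 2 * k < n) (hk : 1 ≤ k)
    (f : Equiv.Perm {s : Finset (Fin n) // s.card = k})
    (hf : f ∈ graphAut (kneserGraph n k)) : ∃ σ : Equiv.Perm (Fin n), Phi n k σ = f := by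
  have hH : ∀ A B : {s : Finset (Fin n) // s.card = k},
      Disjoint A.1 B.1 ↔ Disjoint (f A).1 (f B).1 := by
    intro A B
    rw [← kneser_adj hk, ← kneser_adj hk]
    exact (hf A B).symm
  obtain ⟨σ, himg, -⟩ := perm_W hn hk f f hH
  refine ⟨σ, ?_⟩
  apply Equiv.ext
  intro A
  apply Subtype.ext
  show (permV n k σ A).1 = (f A).1
  rw [permV_val]
  exact (himg A).symm

def Phi' (n k : ℕ) (hk : 1 ≤ k) :
    Equiv.Perm (Fin n) →* (graphAut (kneserGraph n k)) :=
  (Phi n k).codRestrict _ (fun σ => Phi_mem n k hk σ)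

lemma Phi'_bij (hn : 2 * k < n) (hk : 1 ≤ k) : Function.Bijective (Phi' n k hk) := by
  constructor
  · intro σ τ h
    apply Phi_inj hn hk
    exact congrArg Subtype.val h
  · rintro ⟨f, hf⟩
    obtain ⟨σ, hσ⟩ := Phi_surj hn hk f hf
    exact ⟨σ, Subtype.ext hσ⟩

def Psi (n k : ℕ) (hn : 2 * k < n) (hk : 1 ≤ k) :
    Equiv.Perm (Fin 2) × (graphAut (kneserGraph n k)) →*
      (graphAut (kroneckerCover (kneserGraph n k))) :=
  MonoidHom.mk' (fun p => ⟨Equiv.prodCongr p.1 p.2.1, by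
    intro x y
    show ((Equiv.prodCongr p.1 p.2.1 x).1 ≠ _ ∧ _) ↔ _
    constructor
    · rintro ⟨h1, h2⟩
      exact ⟨fun he => h1 (congrArg p.1 he), (p.2.2 x.2 y.2).mp h2⟩
    · rintro ⟨h1, h2⟩
      exact ⟨fun he => h1 (p.1.injective he), (p.2.2 x.2 y.2).mpr h2⟩⟩) (by
    intro p q
    apply Subtype.ext
    apply Equiv.ext
    intro x
    rfl)

lemma Psi_bij (hn : 2 * k < n) (hk : 1 ≤ k) : Function.Bijective (Psi n k hn hk) := by
  constructor
  · obtain ⟨A₀, hA₀u, hA₀c⟩ := Finset.exists_subset_card_eq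
      (show k ≤ (univ : Finset (Fin n)).card by
        rw [Finset.card_univ, Fintype.card_fin]; omega)
    intro p q h
    have h' : Equiv.prodCongr p.1 p.2.1 = Equiv.prodCongr q.1 q.2.1 :=
      congrArg Subtype.val h
    have happ : ∀ x, Equiv.prodCongr p.1 p.2.1 x = Equiv.prodCongr q.1 q.2.1 x :=
      fun x => congrFun (congrArg _ h') x
    have hc : p.1 = q.1 := by
      apply Equiv.ext
      intro a
      exact (Prod.ext_iff.mp (happ (a, ⟨A₀, hA₀c⟩))).1
    have hfv : ∀ A, p.2.1 A = q.2.1 A := by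
      intro A
      exact (Prod.ext_iff.mp (happ (0, A))).2
    exact Prod.ext hc (Subtype.ext (Equiv.ext hfv))
  · rintro ⟨π, hπ⟩
    obtain ⟨c, f, hf, heq⟩ := decompose hn hk π hπ
    exact ⟨(c, ⟨f, hf⟩), Subtype.ext heq.symm⟩

end ABK
end

/-- Mirafzal: for `n > 2k`, `k ≥ 1`, every automorphism of the bipartite
Kneser graph `H(n,k) = K₂ × K(n,k)` is `c × f` for a unique pair of an automorphism `c`
of `K₂` and an automorphism `f` of `K(n,k)`; in particular
`Aut(H(n,k)) ≅ Z₂ × S_n`. -/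
theorem aut_bipartiteKneser (n k : ℕ) (hn : 2 * k < n) (hk : 1 ≤ k) :
    (∀ π ∈ graphAut (kroneckerCover (kneserGraph n k)),
      ∃! cf : Equiv.Perm (Fin 2) × Equiv.Perm {s : Finset (Fin n) // s.card = k},
        cf.2 ∈ graphAut (kneserGraph n k) ∧ π = Equiv.prodCongr cf.1 cf.2) ∧
    Nonempty ((graphAut (kroneckerCover (kneserGraph n k))) ≃*
      Multiplicative (ZMod 2) × Equiv.Perm (Fin n)) := by
  constructor
  · intro π hπ
    obtain ⟨c, f, hf, heq⟩ := ABK.decompose hn hk π hπ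
    refine ⟨(c, f), ⟨hf, heq⟩, ?_⟩
    rintro ⟨c', f'⟩ ⟨hf', heq'⟩
    obtain ⟨A₀, hA₀u, hA₀c⟩ := Finset.exists_subset_card_eq
      (show k ≤ (Finset.univ : Finset (Fin n)).card by
        rw [Finset.card_univ, Fintype.card_fin]; omega)
    have h' : Equiv.prodCongr c' f' = Equiv.prodCongr c f := heq'.symm.trans heq
    have happ : ∀ x, Equiv.prodCongr c' f' x = Equiv.prodCongr c f x :=
      fun x => congrFun (congrArg _ h') x
    have hc : c' = c := by
      apply Equiv.ext
      intro a
      exact (Prod.ext_iff.mp (happ (a, ⟨A₀, hA₀c⟩))).1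
    have hfe : f' = f := by
      apply Equiv.ext
      intro A
      exact (Prod.ext_iff.mp (happ (0, A))).2
    rw [hc, hfe]
  · exact ⟨((MulEquiv.ofBijective (ABK.Psi n k hn hk) (ABK.Psi_bij hn hk)).symm).trans
      (MulEquiv.prodCongr ABK.e1
        (MulEquiv.ofBijective (ABK.Phi' n k hk) (ABK.Phi'_bij hn hk)).symm)⟩
end

section
/- Let X be a bigraph with 2-coloring ε, and let α be an odd involution of X such that no vertex x is adjacent to α(x). Then the map x ↦ (ε(x), π(x)) is a graph isomorphism from X onto the Kronecker cover K_2 × (X/α); in particular, every such bigraph is isomorphic to the Kronecker cover of its quotient X/α. -/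
/-- a bigraph `X` with an odd involution `α` (with simple quotient) is
isomorphic to the Kronecker cover of `X/α` via `x ↦ (ε x, π x)`. -/
theorem bigraph_iso_kroneckerCover_quot {V : Type*} (X : SimpleGraph V) (ε : V → Fin 2)
    (hε : ∀ a b, X.Adj a b → ε a ≠ ε b)
    (α : Equiv.Perm V) (hαaut : ∀ a b, X.Adj (α a) (α b) ↔ X.Adj a b)
    (hαinv : ∀ x, α (α x) = x) (hαodd : ∀ x, ε (α x) ≠ ε x)
    (hαns : ∀ x, ¬ X.Adj x (α x)) :
    ∃ e : X ≃g kroneckerCover (quotGraph X α hαinv hαns),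
      ∀ x, e x = (ε x, Quotient.mk (orbitSetoid α hαinv) x) := by
  have fin2 : ∀ a b c : Fin 2, a ≠ b → c ≠ b → a = c := by decide
  set f : V → Fin 2 × Quotient (orbitSetoid α hαinv) :=
    fun x => (ε x, Quotient.mk (orbitSetoid α hαinv) x) with hf
  have hbij : Function.Bijective f := by
    constructor
    · intro x y hxy
      have h1 : ε x = ε y := congrArg Prod.fst hxy
      have h2 := Quotient.exact (congrArg Prod.snd hxy)
      rcases h2 with rfl | rfl
      · rfl
      · exact absurd (hαodd x) (by rw [h1]; exact fun h => h rfl)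
    · rintro ⟨a, q⟩
      obtain ⟨x, rfl⟩ := Quotient.exists_rep q
      by_cases h : ε x = a
      · exact ⟨x, by simp [hf, h]⟩
      · refine ⟨α x, ?_⟩
        have h1 : ε (α x) = a := fin2 _ _ _ (hαodd x) (Ne.symm h)
        have h2 : Quotient.mk (orbitSetoid α hαinv) (α x)
            = Quotient.mk (orbitSetoid α hαinv) x :=
          Quotient.sound (Or.inr (hαinv x).symm)
        simp [hf, h1, h2]
  refine ⟨⟨Equiv.ofBijective f hbij, ?_⟩, fun x => rfl⟩
  intro x y
  simp only [Equiv.ofBijective_apply, hf]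
  constructor
  · rintro ⟨hne, x', y', hx', hy', hadj⟩
    rcases Quotient.exact hx' with rfl | rfl <;> rcases Quotient.exact hy' with rfl | rfl
    · exact hadj
    · exact absurd (fin2 _ _ _ (hε _ _ hadj) (hαodd y')) hne
    · exact absurd (fin2 _ _ _ (hαodd x') (hε _ _ hadj).symm) hne
    · exact (hαaut _ _).mpr hadj
  · intro hadj
    exact ⟨hε _ _ hadj, x, y, rfl, rfl, hadj⟩
end

section
/- Let n be an integer greater than 2, and consider the Kronecker cover K_2 × K_n of the complete graph K_n, with the 2-coloring ε(a,v) = a. If α is an odd involution of K_2 × K_n such that no vertex x is adjacent to α(x), then α(a,v) = (1−a, v) for every vertex (a,v). In other words, there is exactly one odd involution of K_2 × K_n whose quotient is a simple graph, and its quotient is K_n. -/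
/-- for `n > 2`, the only odd involution `α` of `K₂ × K_n` such that no
vertex is adjacent to its image is `α (a, v) = (1 - a, v)`. -/
theorem odd_involution_kroneckerCover_complete (n : ℕ) (hn : 2 < n)
    (α : Equiv.Perm (Fin 2 × Fin n))
    (hα : α ∈ graphAut (kroneckerCover (⊤ : SimpleGraph (Fin n))))
    (hαinv : ∀ p, α (α p) = p) (hαodd : ∀ p : Fin 2 × Fin n, (α p).1 ≠ p.1)
    (hαns : ∀ p, ¬ (kroneckerCover (⊤ : SimpleGraph (Fin n))).Adj p (α p)) :
    ∀ p : Fin 2 × Fin n, α p = (1 - p.1, p.2) := by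
  intro p
  have h1 := hαodd p
  have h2 := hαns p
  simp only [kroneckerCover, SimpleGraph.top_adj, not_and, ne_eq, not_not] at h2
  have h2' : (α p).2 = p.2 := (h2 fun h => h1 h.symm).symm
  have hfst : (α p).1 = 1 - p.1 := by
    have : ∀ a b : Fin 2, a ≠ b → a = 1 - b := by decide
    exact this _ _ h1
  exact Prod.ext hfst h2'
end
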